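/- arXiv:1704.07927 — 7 statements merged into one kernel-verified Lean document; each statement's English description precedes it below -/
import Mathlib

section
/- Fix δ ∈ (0, 1/2) and an integer m. Let a_n, b_n, c_n ∈ ℚ with a_n ≠ 0 and c_n ≠ 0 for all n with |n − m| ≤ 3, and let y_n ∈ ℚ \ {0} for |n − m| ≤ 2 satisfy y_{n+1} + y_{n−1} = (a_n y_n² + b_n y_n + c_n)/y_n² for all n with |n − m| ≤ 1. If |y_m| < ε_m (with respect to the usual archimedean absolute value |·| on ℚ and κ = 3), then either |y_{m+1}| ≥ |y_m|^{−(2−δ)} and |y_{m+2}| ≥ ε_{m+2}, or |y_{m−1}| ≥ |y_m|^{−(2−δ)} and |y_{m−2}| ≥ ε_{m−2}. -/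
/-- The quantity `κ · max{1, |c_n|⁻¹, |b_n|, |a_n|, |c_{n+1}|, |c_{n-1}|, |b_{n+1}|, |b_{n-1}|,
|a_{n+1}|⁻¹, |a_{n-1}|⁻¹}` from the definition of the length scale `ε_n`, for an absolute
value `v` on `ℚ`. -/
noncomputable def epsBound (κ : ℝ) (v : ℚ → ℝ) (a b c : ℤ → ℚ) (n : ℤ) : ℝ :=
  κ * max 1 (max (v (c n))⁻¹ (max (v (b n)) (max (v (a n)) (max (v (c (n + 1)))
    (max (v (c (n - 1))) (max (v (b (n + 1))) (max (v (b (n - 1)))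
      (max (v (a (n + 1)))⁻¹ (v (a (n - 1)))⁻¹))))))))

/-- The length scale `ε_n`, defined by `ε_n^{-δ} = κ · max{1, |c_n|⁻¹, |b_n|, |a_n|,
|c_{n+1}|, |c_{n-1}|, |b_{n+1}|, |b_{n-1}|, |a_{n+1}|⁻¹, |a_{n-1}|⁻¹}`. -/
noncomputable def epsN (κ δ : ℝ) (v : ℚ → ℝ) (a b c : ℤ → ℚ) (n : ℤ) : ℝ :=
  (epsBound κ v a b c n) ^ (-δ⁻¹)

open Real in

lemma step1_aux (δ M a' b' c' u p q : ℝ)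
    (hδ0 : 0 < δ) (hδ2 : 2 ≤ δ⁻¹) (hM : 3 ≤ M)
    (hcM : 3 * |c'|⁻¹ ≤ M) (hb : 3 * |b'| ≤ M) (ha : 3 * |a'| ≤ M)
    (hc0 : c' ≠ 0) (hu0 : u ≠ 0)
    (hE : |u| ≤ M ^ (-δ⁻¹))
    (heqn : p + q = (a' * u^2 + b' * u + c') / u^2) :
    2 * |u| ^ (-(2-δ)) ≤ |p| + |q| := by
  set E := |u| with hEdef
  have hE0 : 0 < E := abs_pos.mpr hu0
  have hM0 : (0:ℝ) < M := by linarith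
  have hM1 : (1:ℝ) ≤ M := by linarith
  have hc'0 : 0 < |c'| := abs_pos.mpr hc0
  have hcM' : 3 / M ≤ |c'| := by
    rw [div_le_iff₀ hM0]
    have h := mul_le_mul_of_nonneg_left hcM hc'0.le
    rw [mul_comm (3:ℝ) |c'|⁻¹, ← mul_assoc, mul_inv_cancel₀ hc'0.ne'] at h
    linarith
  have hEM2 : E ≤ (M^2)⁻¹ := by
    have h1 : M ^ (-δ⁻¹) ≤ M ^ (-(2:ℝ)) :=
      Real.rpow_le_rpow_of_exponent_le hM1 (by linarith)
    have h2 : M ^ (-(2:ℝ)) = (M^2)⁻¹ := by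
      rw [Real.rpow_neg hM0.le, Real.rpow_two]
    linarith [hE, h1, h2.le]
  have hE1 : E ≤ 1 := by
    have : (M^2)⁻¹ ≤ 1 := by
      rw [inv_le_one_iff₀]; right; nlinarith
    linarith
  have heδ : E ^ δ ≤ M⁻¹ := by
    have h1 : E ^ δ ≤ (M ^ (-δ⁻¹)) ^ δ := Real.rpow_le_rpow (abs_nonneg _) hE hδ0.le
    have h2 : (M ^ (-δ⁻¹)) ^ δ = M⁻¹ := by
      rw [← Real.rpow_mul hM0.le, show -δ⁻¹ * δ = -1 by
        rw [neg_mul, inv_mul_cancel₀ hδ0.ne'], Real.rpow_neg_one]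
    linarith [h2 ▸ h1]
  have heδ0 : 0 ≤ E ^ δ := Real.rpow_nonneg hE0.le δ
  -- triangle inequality bound
  have hP : |c'| - |b'| * E - |a'| * E^2 ≤ |a' * u^2 + b' * u + c'| := by
    have hx : |a' * u^2 + b' * u| ≤ |a'| * E^2 + |b'| * E := by
      calc |a' * u^2 + b' * u| ≤ |a' * u^2| + |b' * u| := abs_add_le _ _
        _ = |a'| * E^2 + |b'| * E := by rw [abs_mul, abs_mul, abs_pow]
    have h := abs_sub_abs_le_abs_sub c' (-(a' * u^2 + b' * u))
    rw [abs_neg, show c' - -(a' * u^2 + b' * u) = a' * u^2 + b' * u + c' by ring] at h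
    linarith
  have hsum : (|c'| - |b'| * E - |a'| * E^2) / E^2 ≤ |p| + |q| := by
    have h1 : |p + q| = |a' * u^2 + b' * u + c'| / E^2 := by
      rw [heqn, abs_div, abs_pow]
    have h2 : (|c'| - |b'| * E - |a'| * E^2) / E^2 ≤ |a' * u^2 + b' * u + c'| / E^2 :=
      div_le_div_of_nonneg_right hP (by positivity)
    calc (|c'| - |b'| * E - |a'| * E^2) / E^2 ≤ |p + q| := by rw [h1]; exact h2
      _ ≤ |p| + |q| := abs_add_le _ _
  -- rewrite the rpow
  have hT : 2 * E ^ (-(2-δ)) = (2 * E ^ δ) / E^2 := by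
    rw [show -(2-δ) = δ + (-2:ℝ) by ring, Real.rpow_add hE0,
      Real.rpow_neg hE0.le, Real.rpow_two]
    ring
  rw [hT]
  refine le_trans (div_le_div_of_nonneg_right ?_ (by positivity)) hsum
  -- core arithmetic: 2 E^δ ≤ |c'| - |b'| E - |a'| E²
  have hbE : |b'| * E ≤ 1 / (3*M) := by
    have h1 : |b'| * E ≤ (M/3) * (M^2)⁻¹ :=
      mul_le_mul (by linarith) hEM2 hE0.le (by linarith)
    have h2 : (M/3) * (M^2)⁻¹ = 1/(3*M) := by field_simp
    linarith [h2 ▸ h1]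
  have haE : |a'| * E^2 ≤ 1 / (3*M) := by
    have hE2 : E^2 ≤ (M^2)⁻¹ := by nlinarith
    have h1 : |a'| * E^2 ≤ (M/3) * (M^2)⁻¹ :=
      mul_le_mul (by linarith) hE2 (by positivity) (by linarith)
    have h2 : (M/3) * (M^2)⁻¹ = 1/(3*M) := by field_simp
    linarith [h2 ▸ h1]
  have hfin : 2 * M⁻¹ + 1/(3*M) + 1/(3*M) ≤ 3/M := by
    rw [show 2 * M⁻¹ + 1/(3*M) + 1/(3*M) = (8/3) * (1/M) by field_simp; ring,
      show (3:ℝ)/M = 3 * (1/M) by ring]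
    have : (0:ℝ) < 1/M := by positivity
    nlinarith
  linarith [heδ, hbE, haE, hfin, hcM']

open Real in

lemma branch_aux (δ M M₂ a' b' c' u w z : ℝ)
    (hδ0 : 0 < δ) (hδ2 : 2 ≤ δ⁻¹)
    (hM : 3 ≤ M) (hM₂ : 3 ≤ M₂)
    (hAM : 3 * |a'|⁻¹ ≤ M)
    (hAM₂ : 3 * |a'|⁻¹ ≤ M₂)
    (hB : 3 * |b'| ≤ M) (hC : 3 * |c'| ≤ M)
    (ha0 : a' ≠ 0) (hu0 : u ≠ 0) (hw0 : w ≠ 0)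
    (hE : |u| ≤ M ^ (-δ⁻¹))
    (hY : |u| ^ (-(2-δ)) ≤ |w|)
    (heqn : z + u = (a' * w^2 + b' * w + c') / w^2) :
    M₂ ^ (-δ⁻¹) ≤ |z| := by
  set E := |u| with hEdef
  set Y := |w| with hYdef
  set A := |a'| with hAdef
  have hE0 : 0 < E := abs_pos.mpr hu0
  have hY0 : 0 < Y := abs_pos.mpr hw0
  have hA0 : 0 < A := abs_pos.mpr ha0
  have hM0 : (0:ℝ) < M := by linarith
  have hM1 : (1:ℝ) ≤ M := by linarith
  -- A ≥ 3/M
  have hAge : 3 / M ≤ A := by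
    rw [div_le_iff₀ hM0]
    have h := mul_le_mul_of_nonneg_left hAM hA0.le
    rw [mul_comm (3:ℝ) A⁻¹, ← mul_assoc, mul_inv_cancel₀ hA0.ne'] at h
    linarith
  -- E ≤ (M^2)⁻¹
  have hEM2 : E ≤ (M^2)⁻¹ := by
    have h1 : M ^ (-δ⁻¹) ≤ M ^ (-(2:ℝ)) :=
      Real.rpow_le_rpow_of_exponent_le hM1 (by linarith)
    have h2 : M ^ (-(2:ℝ)) = (M^2)⁻¹ := by
      rw [Real.rpow_neg hM0.le, Real.rpow_two]
    linarith [hE, h1, h2.le]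
  have hδhalf : δ ≤ 1/2 := by
    have h := mul_le_mul_of_nonneg_left hδ2 hδ0.le
    rw [mul_inv_cancel₀ hδ0.ne'] at h
    linarith
  -- Y ≥ M^3
  have hYM : M^3 ≤ Y := by
    have h1 : (M ^ (-δ⁻¹)) ^ (-(2-δ)) ≤ E ^ (-(2-δ)) :=
      Real.rpow_le_rpow_of_nonpos hE0 hE (by linarith)
    have h2 : (M ^ (-δ⁻¹)) ^ (-(2-δ)) = M ^ (δ⁻¹ * (2-δ)) := by
      rw [← Real.rpow_mul hM0.le]; ring_nf
    have h3 : M ^ (3:ℝ) ≤ M ^ (δ⁻¹ * (2-δ)) := by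
      apply Real.rpow_le_rpow_of_exponent_le hM1
      nlinarith
    have h4 : M ^ (3:ℝ) = M^3 := by
      rw [show (3:ℝ) = ((3:ℕ):ℝ) by norm_num, Real.rpow_natCast]
    calc M^3 = M^(3:ℝ) := h4.symm
      _ ≤ M ^ (δ⁻¹ * (2-δ)) := h3
      _ = (M ^ (-δ⁻¹)) ^ (-(2-δ)) := h2.symm
      _ ≤ E ^ (-(2-δ)) := h1
      _ ≤ Y := hY
  -- lower bound on |z|
  have hz : A - |b'|/Y - |c'|/Y^2 - E ≤ |z| := by
    have heqn2 : a' = z + u - b'/w - c'/w^2 := by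
      rw [heqn]; field_simp; ring
    have h4 : |z + u - b'/w - c'/w^2| ≤ |z| + E + |b'/w| + |c'/w^2| := by
      calc |z + u - b'/w - c'/w^2| ≤ |z + u - b'/w| + |c'/w^2| := abs_sub _ _
        _ ≤ |z + u| + |b'/w| + |c'/w^2| := by linarith [abs_sub (z+u) (b'/w)]
        _ ≤ |z| + E + |b'/w| + |c'/w^2| := by linarith [abs_add_le z u]
    rw [← heqn2] at h4
    rw [show |b'/w| = |b'|/Y by rw [abs_div], show |c'/w^2| = |c'|/Y^2 by
      rw [abs_div, abs_pow]] at h4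
    linarith
  -- error bounds
  have hbY : |b'|/Y ≤ 1/(3*M) := by
    rw [div_le_div_iff₀ hY0 (by positivity)]
    nlinarith [sq_nonneg M, hYM, hB, abs_nonneg b']
  have hMY : M ≤ Y := by
    have h : M ≤ M^3 := by nlinarith [hM]
    linarith [hYM]
  have hcY : |c'|/Y^2 ≤ 1/(3*M) := by
    rw [div_le_div_iff₀ (by positivity) (by positivity)]
    have h1 : |c'| * (3 * M) = (3 * |c'|) * M := by ring
    have h2 : (3 * |c'|) * M ≤ M * M := mul_le_mul_of_nonneg_right hC hM0.le
    have h3 : M * M ≤ Y * Y := mul_le_mul hMY hMY hM0.le hY0.le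
    have h4 : Y * Y = Y^2 := (sq Y).symm
    linarith
  have hEb : E ≤ 1/(3*M) := by
    rw [le_div_iff₀ (by positivity)]
    have h1 : E * (3*M) ≤ (M^2)⁻¹ * (3*M) := mul_le_mul_of_nonneg_right hEM2 (by positivity)
    have h2 : (M^2)⁻¹ * (3*M) = 3/M := by field_simp
    have h3 : 3/M ≤ 1 := by rw [div_le_one hM0]; linarith
    linarith
  have h13 : 1/(3*M) ≤ A/9 := by
    rw [div_le_div_iff₀ (by positivity) (by norm_num)]
    have h1 : 3 ≤ A * M := by rw [div_le_iff₀ hM0] at hAge; linarith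
    have h2 : A * (3*M) = 3*(A*M) := by ring
    linarith
  -- ε_{m±2} ≤ A/9
  have hM₂0 : (0:ℝ) < M₂ := by linarith
  have heps : M₂ ^ (-δ⁻¹) ≤ A/9 := by
    have h1 : M₂ ^ (-δ⁻¹) ≤ M₂ ^ (-(2:ℝ)) :=
      Real.rpow_le_rpow_of_exponent_le (by linarith) (by linarith)
    have h2 : M₂ ^ (-(2:ℝ)) = (M₂^2)⁻¹ := by
      rw [Real.rpow_neg hM₂0.le, Real.rpow_two]
    have h3 : 9 * A⁻¹ ≤ M₂^2 := by
      have hm : (3*A⁻¹)*3 ≤ M₂*M₂ := mul_le_mul hAM₂ hM₂ (by norm_num) hM₂0.le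
      have e1 : (3*A⁻¹)*3 = 9*A⁻¹ := by ring
      have e2 : M₂*M₂ = M₂^2 := (sq M₂).symm
      linarith
    have h4 : (M₂^2)⁻¹ ≤ A/9 := by
      have h5 : (M₂^2)⁻¹ ≤ (9 * A⁻¹)⁻¹ := by
        apply inv_anti₀ (by positivity) h3
      have h6 : (9 * A⁻¹)⁻¹ = A/9 := by
        rw [mul_inv, inv_inv]; ring
      linarith [h6 ▸ h5]
    linarith
  linarith [hz, hbY, hcY, hEb, h13, heps]

lemma epsBound_le_comp' (κ : ℝ) (hκ : 0 ≤ κ) (v : ℚ → ℝ) (a b c : ℤ → ℚ) (n : ℤ) (r : ℝ)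
    (h : r ≤ max 1 (max (v (c n))⁻¹ (max (v (b n)) (max (v (a n)) (max (v (c (n + 1)))
      (max (v (c (n - 1))) (max (v (b (n + 1))) (max (v (b (n - 1)))
        (max (v (a (n + 1)))⁻¹ (v (a (n - 1)))⁻¹))))))))) :
    κ * r ≤ epsBound κ v a b c n :=
  mul_le_mul_of_nonneg_left h hκ

set_option maxHeartbeats 4000000 in
/-- For the archimedean absolute value (with `κ = 3`): if `|y_m| < ε_m` then either
`|y_{m+1}| ≥ |y_m|^{-(2-δ)}` and `|y_{m+2}| ≥ ε_{m+2}`, or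
`|y_{m-1}| ≥ |y_m|^{-(2-δ)}` and `|y_{m-2}| ≥ ε_{m-2}`. -/
theorem small_value_forces_large_neighbour_arch
    (δ : ℝ) (hδ : δ ∈ Set.Ioo (0 : ℝ) (1 / 2)) (m : ℤ) (a b c y : ℤ → ℚ)
    (ha : ∀ n, |n - m| ≤ 3 → a n ≠ 0) (hc : ∀ n, |n - m| ≤ 3 → c n ≠ 0)
    (hy : ∀ n, |n - m| ≤ 2 → y n ≠ 0)
    (heq : ∀ n, |n - m| ≤ 1 →
      y (n + 1) + y (n - 1) = (a n * y n ^ 2 + b n * y n + c n) / y n ^ 2)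
    (hsmall : |(y m : ℝ)| < epsN 3 δ (fun x => |(x : ℝ)|) a b c m) :
    (|(y (m + 1) : ℝ)| ≥ |(y m : ℝ)| ^ (-(2 - δ)) ∧
        |(y (m + 2) : ℝ)| ≥ epsN 3 δ (fun x => |(x : ℝ)|) a b c (m + 2)) ∨
      (|(y (m - 1) : ℝ)| ≥ |(y m : ℝ)| ^ (-(2 - δ)) ∧
        |(y (m - 2) : ℝ)| ≥ epsN 3 δ (fun x => |(x : ℝ)|) a b c (m - 2)) := by
  obtain ⟨hδ0, hδhalf⟩ := hδ
  have hδ2 : 2 ≤ δ⁻¹ := by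
    have h := inv_anti₀ hδ0 hδhalf.le
    norm_num at h
    linarith
  simp only [epsN] at hsmall ⊢
  set M := epsBound 3 (fun x => |(x : ℝ)|) a b c m with hMdef
  -- nonvanishing facts (cast to ℝ)
  have hym : ((y m : ℚ) : ℝ) ≠ 0 := by
    exact_mod_cast hy m (by rw [abs_le]; omega)
  have hyp1 : ((y (m + 1) : ℚ) : ℝ) ≠ 0 := by
    exact_mod_cast hy (m + 1) (by rw [abs_le]; omega)
  have hym1 : ((y (m - 1) : ℚ) : ℝ) ≠ 0 := by
    exact_mod_cast hy (m - 1) (by rw [abs_le]; omega)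
  have hcm0 : ((c m : ℚ) : ℝ) ≠ 0 := by
    exact_mod_cast hc m (by rw [abs_le]; omega)
  have hap0 : ((a (m + 1) : ℚ) : ℝ) ≠ 0 := by
    exact_mod_cast ha (m + 1) (by rw [abs_le]; omega)
  have ham0 : ((a (m - 1) : ℚ) : ℝ) ≠ 0 := by
    exact_mod_cast ha (m - 1) (by rw [abs_le]; omega)
  -- component bounds from epsBound at m
  have hM3 : 3 ≤ M := by
    have h := epsBound_le_comp' 3 (by norm_num) (fun x => |(x : ℝ)|) a b c m 1
      (by simp [le_max_iff])
    linarith [hMdef.le, hMdef.ge]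
  have hcm : 3 * |((c m : ℝ))|⁻¹ ≤ M := by
    have h := epsBound_le_comp' 3 (by norm_num) (fun x => |(x : ℝ)|) a b c m
      (|((c m : ℝ))|⁻¹) (by simp [le_max_iff])
    linarith [hMdef.le, hMdef.ge]
  have hbm : 3 * |((b m : ℝ))| ≤ M := by
    have h := epsBound_le_comp' 3 (by norm_num) (fun x => |(x : ℝ)|) a b c m
      (|((b m : ℝ))|) (by simp [le_max_iff])
    linarith [hMdef.le, hMdef.ge]
  have ham : 3 * |((a m : ℝ))| ≤ M := by
    have h := epsBound_le_comp' 3 (by norm_num) (fun x => |(x : ℝ)|) a b c m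
      (|((a m : ℝ))|) (by simp [le_max_iff])
    linarith [hMdef.le, hMdef.ge]
  have hbp : 3 * |((b (m + 1) : ℝ))| ≤ M := by
    have h := epsBound_le_comp' 3 (by norm_num) (fun x => |(x : ℝ)|) a b c m
      (|((b (m + 1) : ℝ))|) (by simp [le_max_iff])
    linarith [hMdef.le, hMdef.ge]
  have hbn : 3 * |((b (m - 1) : ℝ))| ≤ M := by
    have h := epsBound_le_comp' 3 (by norm_num) (fun x => |(x : ℝ)|) a b c m
      (|((b (m - 1) : ℝ))|) (by simp [le_max_iff])
    linarith [hMdef.le, hMdef.ge]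
  have hcp : 3 * |((c (m + 1) : ℝ))| ≤ M := by
    have h := epsBound_le_comp' 3 (by norm_num) (fun x => |(x : ℝ)|) a b c m
      (|((c (m + 1) : ℝ))|) (by simp [le_max_iff])
    linarith [hMdef.le, hMdef.ge]
  have hcn : 3 * |((c (m - 1) : ℝ))| ≤ M := by
    have h := epsBound_le_comp' 3 (by norm_num) (fun x => |(x : ℝ)|) a b c m
      (|((c (m - 1) : ℝ))|) (by simp [le_max_iff])
    linarith [hMdef.le, hMdef.ge]
  have hap : 3 * |((a (m + 1) : ℝ))|⁻¹ ≤ M := by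
    have h := epsBound_le_comp' 3 (by norm_num) (fun x => |(x : ℝ)|) a b c m
      (|((a (m + 1) : ℝ))|⁻¹) (by simp [le_max_iff])
    linarith [hMdef.le, hMdef.ge]
  have han : 3 * |((a (m - 1) : ℝ))|⁻¹ ≤ M := by
    have h := epsBound_le_comp' 3 (by norm_num) (fun x => |(x : ℝ)|) a b c m
      (|((a (m - 1) : ℝ))|⁻¹) (by simp [le_max_iff])
    linarith [hMdef.le, hMdef.ge]
  -- the main equation at m, cast to ℝ
  have heq0 : ((y (m + 1) : ℚ) : ℝ) + ((y (m - 1) : ℚ) : ℝ) =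
      (((a m : ℚ) : ℝ) * ((y m : ℚ) : ℝ) ^ 2 + ((b m : ℚ) : ℝ) * ((y m : ℚ) : ℝ)
        + ((c m : ℚ) : ℝ)) / ((y m : ℚ) : ℝ) ^ 2 := by
    exact_mod_cast heq m (by rw [abs_le]; omega)
  have hstep1 := step1_aux δ M ((a m : ℚ) : ℝ) ((b m : ℚ) : ℝ) ((c m : ℚ) : ℝ)
    ((y m : ℚ) : ℝ) ((y (m + 1) : ℚ) : ℝ) ((y (m - 1) : ℚ) : ℝ)
    hδ0 hδ2 hM3 hcm hbm ham hcm0 hym hsmall.le heq0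
  by_cases hcase : |((y m : ℚ) : ℝ)| ^ (-(2 - δ)) ≤ |((y (m + 1) : ℚ) : ℝ)|
  · left
    refine ⟨hcase, ?_⟩
    set M₂ := epsBound 3 (fun x => |(x : ℝ)|) a b c (m + 2) with hM2def
    have hM₂3 : 3 ≤ M₂ := by
      have h := epsBound_le_comp' 3 (by norm_num) (fun x => |(x : ℝ)|) a b c (m + 2) 1
        (by simp [le_max_iff])
      linarith [hM2def.le, hM2def.ge]
    have hapM₂ : 3 * |((a (m + 1) : ℝ))|⁻¹ ≤ M₂ := by
      have h := epsBound_le_comp' 3 (by norm_num) (fun x => |(x : ℝ)|) a b c (m + 2)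
        (|((a (m + 1) : ℝ))|⁻¹) (by rw [show m + 2 - 1 = m + 1 by ring]; simp [le_max_iff])
      linarith [hM2def.le, hM2def.ge]
    have heqn : ((y (m + 2) : ℚ) : ℝ) + ((y m : ℚ) : ℝ) =
        (((a (m + 1) : ℚ) : ℝ) * ((y (m + 1) : ℚ) : ℝ) ^ 2
          + ((b (m + 1) : ℚ) : ℝ) * ((y (m + 1) : ℚ) : ℝ)
          + ((c (m + 1) : ℚ) : ℝ)) / ((y (m + 1) : ℚ) : ℝ) ^ 2 := by
      have h := heq (m + 1) (by rw [abs_le]; omega)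
      rw [show m + 1 + 1 = m + 2 by ring, show m + 1 - 1 = m by ring] at h
      exact_mod_cast h
    exact branch_aux δ M M₂ ((a (m + 1) : ℚ) : ℝ) ((b (m + 1) : ℚ) : ℝ)
      ((c (m + 1) : ℚ) : ℝ) ((y m : ℚ) : ℝ) ((y (m + 1) : ℚ) : ℝ) ((y (m + 2) : ℚ) : ℝ)
      hδ0 hδ2 hM3 hM₂3 hap hapM₂ hbp hcp hap0 hym hyp1 hsmall.le hcase heqn
  · right
    push_neg at hcase
    have hcase' : |((y m : ℚ) : ℝ)| ^ (-(2 - δ)) ≤ |((y (m - 1) : ℚ) : ℝ)| := by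
      linarith
    refine ⟨hcase', ?_⟩
    set M₂ := epsBound 3 (fun x => |(x : ℝ)|) a b c (m - 2) with hM2def
    have hM₂3 : 3 ≤ M₂ := by
      have h := epsBound_le_comp' 3 (by norm_num) (fun x => |(x : ℝ)|) a b c (m - 2) 1
        (by simp [le_max_iff])
      linarith [hM2def.le, hM2def.ge]
    have hanM₂ : 3 * |((a (m - 1) : ℝ))|⁻¹ ≤ M₂ := by
      have h := epsBound_le_comp' 3 (by norm_num) (fun x => |(x : ℝ)|) a b c (m - 2)
        (|((a (m - 1) : ℝ))|⁻¹) (by rw [show m - 2 + 1 = m - 1 by ring]; simp [le_max_iff])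
      linarith [hM2def.le, hM2def.ge]
    have heqn : ((y (m - 2) : ℚ) : ℝ) + ((y m : ℚ) : ℝ) =
        (((a (m - 1) : ℚ) : ℝ) * ((y (m - 1) : ℚ) : ℝ) ^ 2
          + ((b (m - 1) : ℚ) : ℝ) * ((y (m - 1) : ℚ) : ℝ)
          + ((c (m - 1) : ℚ) : ℝ)) / ((y (m - 1) : ℚ) : ℝ) ^ 2 := by
      have h := heq (m - 1) (by rw [abs_le]; omega)
      rw [show m - 1 + 1 = m by ring, show m - 1 - 1 = m - 2 by ring] at h
      have h2 : ((y m : ℚ) : ℝ) + ((y (m - 2) : ℚ) : ℝ) =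
          (((a (m - 1) : ℚ) : ℝ) * ((y (m - 1) : ℚ) : ℝ) ^ 2
            + ((b (m - 1) : ℚ) : ℝ) * ((y (m - 1) : ℚ) : ℝ)
            + ((c (m - 1) : ℚ) : ℝ)) / ((y (m - 1) : ℚ) : ℝ) ^ 2 := by exact_mod_cast h
      linarith
    exact branch_aux δ M M₂ ((a (m - 1) : ℚ) : ℝ) ((b (m - 1) : ℚ) : ℝ)
      ((c (m - 1) : ℚ) : ℝ) ((y m : ℚ) : ℝ) ((y (m - 1) : ℚ) : ℝ) ((y (m - 2) : ℚ) : ℝ)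
      hδ0 hδ2 hM3 hM₂3 han hanM₂ hbn hcn ham0 hym hym1 hsmall.le hcase' heqn
end

section
/- Fix a prime number p, δ ∈ (0, 1/2), and an integer m. Let a_n, b_n, c_n ∈ ℚ with a_n ≠ 0 and c_n ≠ 0 for all n with |n − m| ≤ 3, and let y_n ∈ ℚ \ {0} for |n − m| ≤ 2 satisfy y_{n+1} + y_{n−1} = (a_n y_n² + b_n y_n + c_n)/y_n² for all n with |n − m| ≤ 1. If |y_m|_p < ε_m (with respect to the p-adic absolute value |·|_p on ℚ and κ = 1), then either |y_{m+1}|_p ≥ |y_m|_p^{−(2−δ)} and |y_{m+2}|_p ≥ ε_{m+2}, or |y_{m−1}|_p ≥ |y_m|_p^{−(2−δ)} and |y_{m−2}|_p ≥ ε_{m−2}. -/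
section Abstract

variable (v : ℚ → ℝ)
  (hv0 : ∀ x, 0 ≤ v x)
  (hvz : ∀ x : ℚ, v x = 0 ↔ x = 0)
  (hvm : ∀ x y, v (x * y) = v x * v y)
  (hva : ∀ x y : ℚ, v (x + y) ≤ max (v x) (v y))

include hv0 hvz in
lemma vpos {x : ℚ} (hx : x ≠ 0) : 0 < v x :=
  lt_of_le_of_ne (hv0 x) (fun h => hx ((hvz x).1 h.symm))

include hv0 hvz hvm in
lemma vone : v 1 = 1 := by
  have h : v 1 * v 1 = 1 * v 1 := by rw [← hvm]; norm_num
  exact mul_right_cancel₀ (vpos v hv0 hvz one_ne_zero).ne' h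

include hv0 hvz hvm in
lemma vneg (x : ℚ) : v (-x) = v x := by
  have hm1 : v (-1 : ℚ) = 1 := by
    have h : v ((-1 : ℚ) * (-1)) = v (-1) * v (-1) := hvm _ _
    norm_num [vone v hv0 hvz hvm] at h
    have := hv0 (-1 : ℚ)
    nlinarith
  calc v (-x) = v ((-1) * x) := by norm_num
    _ = v (-1) * v x := hvm _ _
    _ = v x := by rw [hm1, one_mul]

include hv0 hvz hvm hva in
lemma vadd_eq_right {u w : ℚ} (h : v u < v w) : v (u + w) = v w := by
  have upper : v (u + w) ≤ v w := (hva u w).trans_eq (max_eq_right h.le)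
  have h2 : v w ≤ max (v (u + w)) (v u) := by
    have hw : w = (u + w) + (-u) := by ring
    calc v w = v ((u + w) + (-u)) := by rw [← hw]
      _ ≤ max (v (u + w)) (v (-u)) := hva _ _
      _ = max (v (u + w)) (v u) := by rw [vneg v hv0 hvz hvm]
  rcases le_or_gt (v w) (v (u + w)) with h3 | h3
  · exact le_antisymm upper h3
  · exact absurd h2 (not_le.2 (max_lt h3 h))

include hvz hvm in
lemma vdiv (x : ℚ) {z : ℚ} (hz : z ≠ 0) : v (x / z) = v x / v z := by
  have h : x / z * z = x := div_mul_cancel₀ _ hz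
  have h2 : v (x / z) * v z = v x := by rw [← hvm, h]
  have hz' : v z ≠ 0 := fun h0 => hz ((hvz z).1 h0)
  field_simp [← h2]
  exact h2

include hvm in
lemma vsq (x : ℚ) : v (x ^ 2) = v x ^ 2 := by
  rw [pow_two, hvm, pow_two]

open Real in
include hv0 hvz hvm hva in
/-- Step 1: if `v ym < E` then the RHS of the recurrence has value `≥ (v ym)^{-(2-δ)}`. -/
lemma step_one {δ E : ℝ} (hδ : δ ∈ Set.Ioo (0 : ℝ) (1 / 2))
    (hE0 : 0 < E) (hE1 : E ≤ 1)
    {A B C ym s : ℚ} (hym : ym ≠ 0) (ht : v ym < E)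
    (hC : E ^ δ ≤ v C) (hB : v B ≤ E ^ (-δ)) (hA : v A ≤ E ^ (-δ))
    (heq : s = (A * ym ^ 2 + B * ym + C) / ym ^ 2) :
    v ym ^ (-(2 - δ)) ≤ v s := by
  obtain ⟨hδ0, hδ2⟩ := hδ
  set t := v ym with htdef
  have ht0 : 0 < t := vpos v hv0 hvz hym
  have hCpos : 0 < v C := lt_of_lt_of_le (rpow_pos_of_pos hE0 δ) hC
  -- the numerator is dominated by C
  have hnum : v (A * ym ^ 2 + B * ym + C) = v C := by
    have key : v (A * ym ^ 2 + B * ym) < v C := by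
      have h1 : v (A * ym ^ 2) ≤ E ^ (-δ) * t ^ 2 := by
        rw [hvm, vsq v hvm]
        exact mul_le_mul_of_nonneg_right hA (by positivity)
      have h2 : v (B * ym) ≤ E ^ (-δ) * t := by
        rw [hvm]
        exact mul_le_mul_of_nonneg_right hB ht0.le
      have hEd : 0 < E ^ (-δ) := rpow_pos_of_pos hE0 _
      have e1 : E ^ (-δ) * E ^ 2 ≤ E ^ δ := by
        calc E ^ (-δ) * E ^ 2 = E ^ (-δ + (2:ℕ)) := by
              rw [rpow_add hE0, rpow_natCast]
          _ ≤ E ^ δ := by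
              apply rpow_le_rpow_of_exponent_ge hE0 hE1
              push_cast; linarith
      have e2 : E ^ (-δ) * E ≤ E ^ δ := by
        calc E ^ (-δ) * E = E ^ (-δ + 1) := by
              rw [rpow_add hE0, rpow_one]
          _ ≤ E ^ δ := by
              apply rpow_le_rpow_of_exponent_ge hE0 hE1
              linarith
      have hq1 : v (A * ym ^ 2) < v C := by
        have : E ^ (-δ) * t ^ 2 < E ^ (-δ) * E ^ 2 := by
          apply mul_lt_mul_of_pos_left _ hEd
          exact pow_lt_pow_left₀ ht ht0.le (by norm_num)
        calc v (A * ym ^ 2) ≤ E ^ (-δ) * t ^ 2 := h1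
          _ < E ^ (-δ) * E ^ 2 := this
          _ ≤ E ^ δ := e1
          _ ≤ v C := hC
      have hq2 : v (B * ym) < v C := by
        have : E ^ (-δ) * t < E ^ (-δ) * E := mul_lt_mul_of_pos_left ht hEd
        calc v (B * ym) ≤ E ^ (-δ) * t := h2
          _ < E ^ (-δ) * E := this
          _ ≤ E ^ δ := e2
          _ ≤ v C := hC
      exact lt_of_le_of_lt (hva _ _) (max_lt hq1 hq2)
    have := vadd_eq_right v hv0 hvz hvm hva key
    simpa [add_assoc] using this
  have hs : v s = v C / t ^ 2 := by
    rw [heq, vdiv v hvz hvm _ (pow_ne_zero 2 hym), hnum, vsq v hvm]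
  rw [hs]
  have hre : t ^ (-(2 - δ)) = t ^ δ / t ^ (2:ℕ) := by
    rw [show -(2 - δ) = δ + (-2 : ℝ) by ring, rpow_add ht0, rpow_neg ht0.le,
      show ((2 : ℝ)) = ((2 : ℕ) : ℝ) by norm_num, rpow_natCast]
    ring
  rw [hre]
  apply div_le_div_of_nonneg_right _ (by positivity)
  calc t ^ δ ≤ E ^ δ := rpow_le_rpow ht0.le ht.le hδ0.le
    _ ≤ v C := hC

open Real in
include hv0 hvz hvm hva in
/-- Step 2: if `v Y` is huge then `v y2 = v A` where
`y2 + ym = (A Y² + B Y + C)/Y²`. -/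
lemma step_two {δ E : ℝ} (hδ : δ ∈ Set.Ioo (0 : ℝ) (1 / 2))
    (hE0 : 0 < E) (hE1 : E ≤ 1)
    {A B C Y ym y2 : ℚ} (hY : Y ≠ 0) (hym : ym ≠ 0) (ht : v ym < E)
    (hA : E ^ δ ≤ v A) (hB : v B ≤ E ^ (-δ)) (hC : v C ≤ E ^ (-δ))
    (hvY : v ym ^ (-(2 - δ)) ≤ v Y)
    (heq : y2 + ym = (A * Y ^ 2 + B * Y + C) / Y ^ 2) :
    v y2 = v A := by
  obtain ⟨hδ0, hδ2⟩ := hδ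
  set t := v ym with htdef
  have ht0 : 0 < t := vpos v hv0 hvz hym
  set W := v Y with hWdef
  have hW0 : 0 < W := vpos v hv0 hvz hY
  have hApos : 0 < v A := lt_of_lt_of_le (rpow_pos_of_pos hE0 δ) hA
  -- lower bound for W
  have hWlb : E ^ (δ - 2) < W := by
    have h1 : E ^ (-(2 - δ)) < t ^ (-(2 - δ)) :=
      rpow_lt_rpow_of_neg ht0 ht (by linarith)
    have : E ^ (δ - 2) = E ^ (-(2 - δ)) := by ring_nf
    rw [this]
    exact lt_of_lt_of_le h1 hvY
  -- rewrite y2 as a single fraction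
  have hy2 : y2 = (A * Y ^ 2 + (B * Y + (C + (-ym) * Y ^ 2))) / Y ^ 2 := by
    have h1 : y2 = (A * Y ^ 2 + B * Y + C) / Y ^ 2 - ym := by
      rw [← heq]; ring
    rw [h1]
    field_simp
    ring
  -- dominant term
  have hmain : v (A * Y ^ 2) = v A * W ^ 2 := by rw [hvm, vsq v hvm]
  have hEd : 0 < E ^ (-δ) := rpow_pos_of_pos hE0 _
  have hWsq : E ^ (2 * δ - 4) < W ^ 2 := by
    have := mul_lt_mul'' hWlb hWlb (by positivity) (by positivity)
    calc E ^ (2 * δ - 4) = E ^ (δ - 2) * E ^ (δ - 2) := by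
          rw [← rpow_add hE0]; ring_nf
      _ < W * W := this
      _ = W ^ 2 := (pow_two W).symm
  -- bound each tail term by < v A * W ^ 2
  have htail1 : v (B * Y) < v A * W ^ 2 := by
    have h1 : v (B * Y) ≤ E ^ (-δ) * W := by
      rw [hvm]; exact mul_le_mul_of_nonneg_right hB hW0.le
    have h2 : E ^ (-δ) * W < v A * W ^ 2 := by
      have key : E ^ (-δ) < v A * W := by
        have : E ^ δ * E ^ (δ - 2) < v A * W := by
          apply mul_lt_mul' hA hWlb (by positivity) hApos
        calc E ^ (-δ) ≤ E ^ (2 * δ - 2) := by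
              apply rpow_le_rpow_of_exponent_ge hE0 hE1; linarith
          _ = E ^ δ * E ^ (δ - 2) := by rw [← rpow_add hE0]; ring_nf
          _ < v A * W := this
      calc E ^ (-δ) * W < (v A * W) * W := by
            exact mul_lt_mul_of_pos_right key hW0
        _ = v A * W ^ 2 := by ring
    exact lt_of_le_of_lt h1 h2
  have htail2 : v C < v A * W ^ 2 := by
    have h2 : E ^ (-δ) < v A * W ^ 2 := by
      have : E ^ δ * E ^ (2 * δ - 4) < v A * W ^ 2 :=
        mul_lt_mul' hA hWsq (by positivity) hApos
      calc E ^ (-δ) ≤ E ^ (3 * δ - 4) := by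
            apply rpow_le_rpow_of_exponent_ge hE0 hE1; linarith
        _ = E ^ δ * E ^ (2 * δ - 4) := by rw [← rpow_add hE0]; ring_nf
        _ < v A * W ^ 2 := this
    exact lt_of_le_of_lt hC h2
  have htail3 : v ((-ym) * Y ^ 2) < v A * W ^ 2 := by
    rw [hvm, vneg v hv0 hvz hvm, vsq v hvm, ← hWdef, ← htdef]
    apply mul_lt_mul_of_pos_right _ (by positivity)
    calc t < E := ht
      _ ≤ E ^ δ := by
          calc E = E ^ (1:ℝ) := (rpow_one E).symm
            _ ≤ E ^ δ := rpow_le_rpow_of_exponent_ge hE0 hE1 (by linarith)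
      _ ≤ v A := hA
  -- the tail sum
  have htail : v (B * Y + (C + (-ym) * Y ^ 2)) < v A * W ^ 2 := by
    apply lt_of_le_of_lt (hva _ _)
    apply max_lt htail1
    exact lt_of_le_of_lt (hva _ _) (max_lt htail2 htail3)
  have hnum : v (A * Y ^ 2 + (B * Y + (C + (-ym) * Y ^ 2))) = v A * W ^ 2 := by
    rw [add_comm]
    rw [vadd_eq_right v hv0 hvz hvm hva (by rw [hmain]; exact htail)]
    exact hmain
  rw [hy2, vdiv v hvz hvm _ (pow_ne_zero 2 hY), hnum, vsq v hvm, ← hWdef]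
  field_simp

end Abstract

section Main

open Real

lemma eps_le_of_bounds {δ : ℝ} (hδ0 : 0 < δ) (hδ2 : δ < 1 / 2) {M x : ℝ}
    (hM1 : 1 ≤ M) (hMx : x⁻¹ ≤ M) (hx : 0 < x) : M ^ (-δ⁻¹) ≤ x := by
  have hδinv : 1 ≤ δ⁻¹ := one_le_inv₀ hδ0 |>.2 (by linarith)
  rcases le_or_gt 1 x with h | h
  · exact le_trans (rpow_le_one_of_one_le_of_nonpos hM1 (by simp [hδ0.le])) h
  · calc M ^ (-δ⁻¹) ≤ (x⁻¹) ^ (-δ⁻¹) := by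
          apply rpow_le_rpow_of_nonpos (by positivity) hMx
          simp; positivity
      _ = x ^ δ⁻¹ := by
          rw [← rpow_neg_one x, ← rpow_mul hx.le]; ring_nf
      _ ≤ x ^ (1:ℝ) := rpow_le_rpow_of_exponent_ge hx h.le hδinv
      _ = x := rpow_one x

section Bounds
variable (v : ℚ → ℝ) (a b c : ℤ → ℚ) (n : ℤ)
lemma eb_one : 1 ≤ epsBound 1 v a b c n := by simp [epsBound, le_max_iff]
lemma eb_cinv : (v (c n))⁻¹ ≤ epsBound 1 v a b c n := by simp [epsBound, le_max_iff]
lemma eb_b : v (b n) ≤ epsBound 1 v a b c n := by simp [epsBound, le_max_iff]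
lemma eb_a : v (a n) ≤ epsBound 1 v a b c n := by simp [epsBound, le_max_iff]
lemma eb_cp : v (c (n + 1)) ≤ epsBound 1 v a b c n := by simp [epsBound, le_max_iff]
lemma eb_cm : v (c (n - 1)) ≤ epsBound 1 v a b c n := by simp [epsBound, le_max_iff]
lemma eb_bp : v (b (n + 1)) ≤ epsBound 1 v a b c n := by simp [epsBound, le_max_iff]
lemma eb_bm : v (b (n - 1)) ≤ epsBound 1 v a b c n := by simp [epsBound, le_max_iff]
lemma eb_apinv : (v (a (n + 1)))⁻¹ ≤ epsBound 1 v a b c n := by simp [epsBound, le_max_iff]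
lemma eb_aminv : (v (a (n - 1)))⁻¹ ≤ epsBound 1 v a b c n := by simp [epsBound, le_max_iff]
end Bounds

theorem gen_main (v : ℚ → ℝ)
    (hv0 : ∀ x, 0 ≤ v x)
    (hvz : ∀ x : ℚ, v x = 0 ↔ x = 0)
    (hvm : ∀ x y, v (x * y) = v x * v y)
    (hva : ∀ x y : ℚ, v (x + y) ≤ max (v x) (v y))
    (δ : ℝ) (hδ : δ ∈ Set.Ioo (0 : ℝ) (1 / 2)) (m : ℤ) (a b c y : ℤ → ℚ)
    (ha : ∀ n, |n - m| ≤ 3 → a n ≠ 0) (hc : ∀ n, |n - m| ≤ 3 → c n ≠ 0)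
    (hy : ∀ n, |n - m| ≤ 2 → y n ≠ 0)
    (heq : ∀ n, |n - m| ≤ 1 →
      y (n + 1) + y (n - 1) = (a n * y n ^ 2 + b n * y n + c n) / y n ^ 2)
    (hsmall : v (y m) < epsN 1 δ v a b c m) :
    (v (y (m + 1)) ≥ v (y m) ^ (-(2 - δ)) ∧
        v (y (m + 2)) ≥ epsN 1 δ v a b c (m + 2)) ∨
      (v (y (m - 1)) ≥ v (y m) ^ (-(2 - δ)) ∧
        v (y (m - 2)) ≥ epsN 1 δ v a b c (m - 2)) := by
  obtain ⟨hδ0, hδ2⟩ := hδ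
  have hδne : δ ≠ 0 := hδ0.ne'
  set B := epsBound 1 v a b c m with hBdef
  set E := epsN 1 δ v a b c m with hEdef
  have hB1 : 1 ≤ B := eb_one v a b c m
  have hB0 : 0 < B := lt_of_lt_of_le one_pos hB1
  have hE0 : 0 < E := rpow_pos_of_pos hB0 _
  have hE1 : E ≤ 1 := rpow_le_one_of_one_le_of_nonpos hB1 (by simp [hδ0.le])
  have hEneg : E ^ (-δ) = B := by
    rw [hEdef, epsN, ← hBdef, ← rpow_mul hB0.le]
    field_simp
    simp
  have hEpos : E ^ δ = B⁻¹ := by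
    rw [hEdef, epsN, ← hBdef, ← rpow_mul hB0.le,
      show -δ⁻¹ * δ = -(δ⁻¹ * δ) by ring, inv_mul_cancel₀ hδne, rpow_neg_one]
  -- positivity of the various values
  have hym : y m ≠ 0 := hy m (by simp)
  have hcm : c m ≠ 0 := hc m (by simp)
  -- bound conversions
  have hinv_le : ∀ x : ℝ, 0 < x → x⁻¹ ≤ B → E ^ δ ≤ x := by
    intro x hx h
    rw [hEpos]
    exact (inv_le_comm₀ hB0 hx).2 h
  have hCm : E ^ δ ≤ v (c m) :=
    hinv_le _ (vpos v hv0 hvz hcm) (eb_cinv v a b c m)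
  have hs1 := step_one v hv0 hvz hvm hva ⟨hδ0, hδ2⟩ hE0 hE1 hym hsmall hCm
    (by rw [hEneg]; exact eb_b v a b c m)
    (by rw [hEneg]; exact eb_a v a b c m)
    (heq m (by simp))
  have habs1 : |m + 1 - m| ≤ (1:ℤ) := by rw [show m + 1 - m = 1 by ring]; norm_num
  have habs1' : |m - 1 - m| ≤ (1:ℤ) := by rw [show m - 1 - m = -1 by ring]; norm_num
  have habs2 : |m + 1 - m| ≤ (2:ℤ) := by rw [show m + 1 - m = 1 by ring]; norm_num
  have habs2' : |m - 1 - m| ≤ (2:ℤ) := by rw [show m - 1 - m = -1 by ring]; norm_num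
  have habs3 : |m + 1 - m| ≤ (3:ℤ) := by rw [show m + 1 - m = 1 by ring]; norm_num
  have habs3' : |m - 1 - m| ≤ (3:ℤ) := by rw [show m - 1 - m = -1 by ring]; norm_num
  rcases le_max_iff.1 (hs1.trans (hva (y (m + 1)) (y (m - 1)))) with h | h
  · left
    refine ⟨h, ?_⟩
    have e2 : y (m + 2) + y m =
        (a (m + 1) * y (m + 1) ^ 2 + b (m + 1) * y (m + 1) + c (m + 1)) / y (m + 1) ^ 2 := by
      have := heq (m + 1) habs1
      rwa [show m + 1 + 1 = m + 2 by ring, show m + 1 - 1 = m by ring] at this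
    have haY : a (m + 1) ≠ 0 := ha (m + 1) habs3
    have hA' : E ^ δ ≤ v (a (m + 1)) :=
      hinv_le _ (vpos v hv0 hvz haY) (eb_apinv v a b c m)
    have h2 := step_two v hv0 hvz hvm hva ⟨hδ0, hδ2⟩ hE0 hE1 (hy (m + 1) habs2) hym
      hsmall hA' (by rw [hEneg]; exact eb_bp v a b c m)
      (by rw [hEneg]; exact eb_cp v a b c m) h e2
    rw [ge_iff_le, h2]
    refine eps_le_of_bounds hδ0 hδ2 (eb_one v a b c (m + 2)) ?_ (vpos v hv0 hvz haY)
    have := eb_aminv v a b c (m + 2)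
    rwa [show m + 2 - 1 = m + 1 by ring] at this
  · right
    refine ⟨h, ?_⟩
    have e2 : y (m - 2) + y m =
        (a (m - 1) * y (m - 1) ^ 2 + b (m - 1) * y (m - 1) + c (m - 1)) / y (m - 1) ^ 2 := by
      have := heq (m - 1) habs1'
      rw [show m - 1 + 1 = m by ring, show m - 1 - 1 = m - 2 by ring] at this
      rw [← this]; ring
    have haY : a (m - 1) ≠ 0 := ha (m - 1) habs3'
    have hA' : E ^ δ ≤ v (a (m - 1)) :=
      hinv_le _ (vpos v hv0 hvz haY) (eb_aminv v a b c m)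
    have h2 := step_two v hv0 hvz hvm hva ⟨hδ0, hδ2⟩ hE0 hE1 (hy (m - 1) habs2') hym
      hsmall hA' (by rw [hEneg]; exact eb_bm v a b c m)
      (by rw [hEneg]; exact eb_cm v a b c m) h e2
    rw [ge_iff_le, h2]
    refine eps_le_of_bounds hδ0 hδ2 (eb_one v a b c (m - 2)) ?_ (vpos v hv0 hvz haY)
    have := eb_apinv v a b c (m - 2)
    rwa [show m - 2 + 1 = m - 1 by ring] at this

end Main

/-- For the `p`-adic absolute value (with `κ = 1`): if `|y_m|_p < ε_m` then either
`|y_{m+1}|_p ≥ |y_m|_p^{-(2-δ)}` and `|y_{m+2}|_p ≥ ε_{m+2}`, or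
`|y_{m-1}|_p ≥ |y_m|_p^{-(2-δ)}` and `|y_{m-2}|_p ≥ ε_{m-2}`. -/
theorem small_value_forces_large_neighbour_padic
    (p : ℕ) (hp : p.Prime)
    (δ : ℝ) (hδ : δ ∈ Set.Ioo (0 : ℝ) (1 / 2)) (m : ℤ) (a b c y : ℤ → ℚ)
    (ha : ∀ n, |n - m| ≤ 3 → a n ≠ 0) (hc : ∀ n, |n - m| ≤ 3 → c n ≠ 0)
    (hy : ∀ n, |n - m| ≤ 2 → y n ≠ 0)
    (heq : ∀ n, |n - m| ≤ 1 →
      y (n + 1) + y (n - 1) = (a n * y n ^ 2 + b n * y n + c n) / y n ^ 2)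
    (hsmall : ((padicNorm p (y m) : ℚ) : ℝ) <
      epsN 1 δ (fun x => ((padicNorm p x : ℚ) : ℝ)) a b c m) :
    (((padicNorm p (y (m + 1)) : ℚ) : ℝ) ≥ ((padicNorm p (y m) : ℚ) : ℝ) ^ (-(2 - δ)) ∧
        ((padicNorm p (y (m + 2)) : ℚ) : ℝ) ≥
          epsN 1 δ (fun x => ((padicNorm p x : ℚ) : ℝ)) a b c (m + 2)) ∨
      (((padicNorm p (y (m - 1)) : ℚ) : ℝ) ≥ ((padicNorm p (y m) : ℚ) : ℝ) ^ (-(2 - δ)) ∧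
        ((padicNorm p (y (m - 2)) : ℚ) : ℝ) ≥
          epsN 1 δ (fun x => ((padicNorm p x : ℚ) : ℝ)) a b c (m - 2)) := by
  haveI : Fact p.Prime := ⟨hp⟩
  exact gen_main (fun x => ((padicNorm p x : ℚ) : ℝ))
    (fun x => by
      show (0:ℝ) ≤ ((padicNorm p x : ℚ) : ℝ)
      exact_mod_cast padicNorm.nonneg x)
    (fun x => by
      show ((padicNorm p x : ℚ) : ℝ) = 0 ↔ x = 0
      constructor
      · intro h
        exact padicNorm.zero_of_padicNorm_eq_zero (by exact_mod_cast h)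
      · intro h
        simp only [h, padicNorm.zero, Rat.cast_zero])
    (fun x z => by push_cast [padicNorm.mul]; ring)
    (fun x z => by
      have h := padicNorm.nonarchimedean (p := p) (q := x) (r := z)
      calc ((padicNorm p (x + z) : ℚ) : ℝ) ≤ ((max (padicNorm p x) (padicNorm p z) : ℚ) : ℝ) := by
            exact_mod_cast h
        _ = max ((padicNorm p x : ℚ) : ℝ) ((padicNorm p z : ℚ) : ℝ) := by
            exact_mod_cast Rat.cast_max _ _)
    δ hδ m a b c y ha hc hy heq hsmall
end

section
/- Fix δ ∈ (0, 1/2) and integers r₀ ≤ r. Let a_n, b_n, c_n ∈ ℚ with a_n ≠ 0 and c_n ≠ 0 for r₀ − 3 ≤ n ≤ r + 3, and let y_n ∈ ℚ \ {0} for r₀ − 3 ≤ n ≤ r + 3 satisfy y_{n+1} + y_{n−1} = (a_n y_n² + b_n y_n + c_n)/y_n² for r₀ − 2 ≤ n ≤ r + 2. Let |·| denote the usual archimedean absolute value on ℚ, let ε_n be defined with κ = 3, and set S₁ = {n : r₀ ≤ n ≤ r and |y_n| < ε_n}. Then Σ_{k∈S₁} log(1/|y_k|) ≤ (1/(2−δ))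 Σ_{k=r₀−1}^{r+1} log⁺|y_k|. -/
private lemma epsB (v : ℚ → ℝ) (a b c : ℤ → ℚ) (n : ℤ) :
    3 ≤ epsBound 3 v a b c n ∧
    3 * (v (c n))⁻¹ ≤ epsBound 3 v a b c n ∧
    3 * v (b n) ≤ epsBound 3 v a b c n ∧
    3 * v (a n) ≤ epsBound 3 v a b c n ∧
    3 * v (c (n + 1)) ≤ epsBound 3 v a b c n ∧
    3 * v (c (n - 1)) ≤ epsBound 3 v a b c n ∧
    3 * v (b (n + 1)) ≤ epsBound 3 v a b c n ∧
    3 * v (b (n - 1)) ≤ epsBound 3 v a b c n ∧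
    3 * (v (a (n + 1)))⁻¹ ≤ epsBound 3 v a b c n ∧
    3 * (v (a (n - 1)))⁻¹ ≤ epsBound 3 v a b c n := by
  unfold epsBound
  set M := max 1 (max (v (c n))⁻¹ (max (v (b n)) (max (v (a n)) (max (v (c (n + 1)))
    (max (v (c (n - 1))) (max (v (b (n + 1))) (max (v (b (n - 1)))
      (max (v (a (n + 1)))⁻¹ (v (a (n - 1)))⁻¹)))))))) with hM
  have h1 : (1:ℝ) ≤ M := le_max_left _ _
  have h2 : (v (c n))⁻¹ ≤ M := le_max_of_le_right (le_max_left _ _)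
  have h3 : v (b n) ≤ M := le_max_of_le_right (le_max_of_le_right (le_max_left _ _))
  have h4 : v (a n) ≤ M := le_max_of_le_right (le_max_of_le_right (le_max_of_le_right
    (le_max_left _ _)))
  have h5 : v (c (n + 1)) ≤ M := le_max_of_le_right (le_max_of_le_right (le_max_of_le_right
    (le_max_of_le_right (le_max_left _ _))))
  have h6 : v (c (n - 1)) ≤ M := le_max_of_le_right (le_max_of_le_right (le_max_of_le_right
    (le_max_of_le_right (le_max_of_le_right (le_max_left _ _)))))
  have h7 : v (b (n + 1)) ≤ M := le_max_of_le_right (le_max_of_le_right (le_max_of_le_right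
    (le_max_of_le_right (le_max_of_le_right (le_max_of_le_right (le_max_left _ _))))))
  have h8 : v (b (n - 1)) ≤ M := le_max_of_le_right (le_max_of_le_right (le_max_of_le_right
    (le_max_of_le_right (le_max_of_le_right (le_max_of_le_right (le_max_of_le_right
      (le_max_left _ _)))))))
  have h9 : (v (a (n + 1)))⁻¹ ≤ M := le_max_of_le_right (le_max_of_le_right (le_max_of_le_right
    (le_max_of_le_right (le_max_of_le_right (le_max_of_le_right (le_max_of_le_right
      (le_max_of_le_right (le_max_left _ _))))))))
  have h10 : (v (a (n - 1)))⁻¹ ≤ M := le_max_of_le_right (le_max_of_le_right (le_max_of_le_right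
    (le_max_of_le_right (le_max_of_le_right (le_max_of_le_right (le_max_of_le_right
      (le_max_of_le_right (le_max_right _ _))))))))
  refine ⟨by linarith, by linarith, by linarith, by linarith, by linarith,
    by linarith, by linarith, by linarith, by linarith, by linarith⟩


private lemma epsB' (a b c : ℤ → ℚ) (n : ℤ) :
    3 ≤ epsBound 3 (fun x => |(x : ℝ)|) a b c n ∧
    3 * (|(c n : ℝ)|)⁻¹ ≤ epsBound 3 (fun x => |(x : ℝ)|) a b c n ∧
    3 * |(b n : ℝ)| ≤ epsBound 3 (fun x => |(x : ℝ)|) a b c n ∧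
    3 * |(a n : ℝ)| ≤ epsBound 3 (fun x => |(x : ℝ)|) a b c n ∧
    3 * |(c (n + 1) : ℝ)| ≤ epsBound 3 (fun x => |(x : ℝ)|) a b c n ∧
    3 * |(c (n - 1) : ℝ)| ≤ epsBound 3 (fun x => |(x : ℝ)|) a b c n ∧
    3 * |(b (n + 1) : ℝ)| ≤ epsBound 3 (fun x => |(x : ℝ)|) a b c n ∧
    3 * |(b (n - 1) : ℝ)| ≤ epsBound 3 (fun x => |(x : ℝ)|) a b c n ∧
    3 * (|(a (n + 1) : ℝ)|)⁻¹ ≤ epsBound 3 (fun x => |(x : ℝ)|) a b c n ∧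
    3 * (|(a (n - 1) : ℝ)|)⁻¹ ≤ epsBound 3 (fun x => |(x : ℝ)|) a b c n :=
  epsB (fun x => |(x : ℝ)|) a b c n


-- ===== auxiliary lemmas =====

private lemma small_mem (δ : ℝ) (hδ0 : 0 < δ) {t Bn : ℝ} (hBn : 3 ≤ Bn) (ht0 : 0 < t)
    (h : t < Bn ^ (-δ⁻¹)) : t ^ δ < Bn⁻¹ ∧ t < 1 := by
  have hB0 : (0:ℝ) < Bn := by linarith
  have h1 : t ^ δ < (Bn ^ (-δ⁻¹)) ^ δ := Real.rpow_lt_rpow ht0.le h hδ0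
  have h2 : (Bn ^ (-δ⁻¹)) ^ δ = Bn⁻¹ := by
    rw [← Real.rpow_mul hB0.le, neg_mul, inv_mul_cancel₀ hδ0.ne', Real.rpow_neg_one]
  rw [h2] at h1
  refine ⟨h1, ?_⟩
  by_contra hcon
  push_neg at hcon
  have hge : (1:ℝ) ≤ t ^ δ := Real.one_le_rpow hcon hδ0.le
  have hinv : Bn⁻¹ ≤ 1/3 := by
    rw [inv_le_comm₀ (by linarith) (by norm_num)]; linarith
  linarith

private lemma abs_poly_bound (X Y W A B C : ℝ)
    (h : C = (X + Y) * W ^ 2 - A * W ^ 2 - B * W) :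
    |C| ≤ (|X| + |Y|) * |W| ^ 2 + |B| * |W| + |A| * |W| ^ 2 := by
  have h1 : |C| ≤ |(X + Y) * W ^ 2| + |A * W ^ 2| + |B * W| := by
    rw [h]
    calc |(X + Y) * W ^ 2 - A * W ^ 2 - B * W|
        ≤ |(X + Y) * W ^ 2 - A * W ^ 2| + |B * W| := abs_sub _ _
    _ ≤ |(X + Y) * W ^ 2| + |A * W ^ 2| + |B * W| := by
        linarith [abs_sub ((X + Y) * W ^ 2) (A * W ^ 2)]
  rw [abs_mul, abs_mul, abs_mul, abs_pow] at h1
  have h2 : |X + Y| * |W| ^ 2 ≤ (|X| + |Y|) * |W| ^ 2 :=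
    mul_le_mul_of_nonneg_right (abs_add_le X Y) (by positivity)
  linarith

private lemma abs_poly_bound2 (X Y W A B C : ℝ)
    (h : A * W ^ 2 = (X + Y) * W ^ 2 - B * W - C) :
    |A| * |W| ^ 2 ≤ (|X| + |Y|) * |W| ^ 2 + |B| * |W| + |C| := by
  have h1 : |A * W ^ 2| ≤ |(X + Y) * W ^ 2| + |B * W| + |C| := by
    rw [h]
    calc |(X + Y) * W ^ 2 - B * W - C|
        ≤ |(X + Y) * W ^ 2 - B * W| + |C| := abs_sub _ _
    _ ≤ |(X + Y) * W ^ 2| + |B * W| + |C| := by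
        linarith [abs_sub ((X + Y) * W ^ 2) (B * W)]
  rw [abs_mul, abs_mul, abs_mul, abs_pow] at h1
  have h2 : |X + Y| * |W| ^ 2 ≤ (|X| + |Y|) * |W| ^ 2 :=
    mul_le_mul_of_nonneg_right (abs_add_le X Y) (by positivity)
  linarith

set_option maxHeartbeats 1000000 in
private lemma neighbor_large (δ t Y Z A Bq C Bn : ℝ)
    (hδ0 : 0 < δ) (hδh : δ < 1/2)
    (ht0 : 0 < t) (ht1 : t < 1) (htδ : t ^ δ < Bn⁻¹)
    (hA : 3 * A ≤ Bn) (hBq : 3 * Bq ≤ Bn) (hC : 3 * C⁻¹ ≤ Bn)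
    (hC0 : 0 < C) (hA0 : 0 ≤ A) (hBq0 : 0 ≤ Bq) (hY0 : 0 ≤ Y) (hZ0 : 0 ≤ Z)
    (hrec : C ≤ (Y + Z) * t ^ 2 + Bq * t + A * t ^ 2) :
    t ^ (δ - 2) ≤ max Y Z := by
  have hB0 : (0:ℝ) < Bn := lt_of_lt_of_le (by positivity) hC
  set p := t ^ δ with hp
  have hp0 : 0 < p := by rw [hp]; exact Real.rpow_pos_of_pos ht0 δ
  have hpB : p * Bn < 1 := by
    have := (mul_lt_mul_of_pos_right htδ hB0).trans_eq (inv_mul_cancel₀ hB0.ne')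
    linarith
  have hCp : 3 * p < C := by
    have h3 : 3 ≤ Bn * C := by
      have := mul_le_mul_of_nonneg_right hC hC0.le
      rw [mul_assoc, inv_mul_cancel₀ hC0.ne'] at this
      linarith
    nlinarith
  have ht_le_p2 : t ≤ p * p := by
    rw [hp, ← Real.rpow_add ht0]
    calc t = t ^ (1:ℝ) := (Real.rpow_one t).symm
    _ ≤ t ^ (δ + δ) := Real.rpow_le_rpow_of_exponent_ge ht0 ht1.le (by linarith)
  have hBqt : Bq * t ≤ p / 3 := by nlinarith
  have hAp : A * p ≤ 1 / 3 := by nlinarith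
  have hAt' : A * t ≤ p / 3 := by
    nlinarith [mul_le_mul_of_nonneg_left ht_le_p2 hA0, mul_le_mul_of_nonneg_right hAp hp0.le]
  have ht2t : t ^ 2 ≤ t := by nlinarith
  have hAt : A * t ^ 2 ≤ p / 3 := by nlinarith [mul_le_mul_of_nonneg_left ht2t hA0]
  have hmax : Y + Z ≤ 2 * max Y Z := by
    rcases le_total Y Z with h | h
    · rw [max_eq_right h]; linarith
    · rw [max_eq_left h]; linarith
  have heq : t ^ (δ - 2) = p / t ^ 2 := by
    rw [Real.rpow_sub ht0, hp, show (2:ℝ) = ((2:ℕ):ℝ) by norm_num, Real.rpow_natCast]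
  rw [heq, div_le_iff₀ (by positivity : (0:ℝ) < t ^ 2)]
  nlinarith [mul_le_mul_of_nonneg_right hmax (sq_nonneg t)]

set_option maxHeartbeats 1000000 in

set_option maxHeartbeats 1000000 in
private lemma no_collision (δ t s Y A Bq C Bn Bm : ℝ)
    (hδ0 : 0 < δ) (hδh : δ < 1/2)
    (ht0 : 0 < t) (ht1 : t < 1) (hs0 : 0 < s) (hs1 : s < 1)
    (htδ : t ^ δ < Bn⁻¹) (hsδ : s ^ δ < Bm⁻¹)
    (hBn3 : 3 ≤ Bn) (hBm3 : 3 ≤ Bm)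
    (hBq : 3 * Bq ≤ Bn) (hC : 3 * C ≤ Bn)
    (hAn : 3 * A⁻¹ ≤ Bn) (hAm : 3 * A⁻¹ ≤ Bm)
    (hA0 : 0 < A) (hBq0 : 0 ≤ Bq) (hC0 : 0 ≤ C)
    (hY : t ^ (δ - 2) ≤ Y)
    (hrec : A * Y ^ 2 ≤ (s + t) * Y ^ 2 + Bq * Y + C) : False := by
  have hBn0 : (0:ℝ) < Bn := by linarith
  have hBm0 : (0:ℝ) < Bm := by linarith
  set p := t ^ δ with hp
  set q := s ^ δ with hq
  clear_value p q
  have hp0 : 0 < p := by rw [hp]; exact Real.rpow_pos_of_pos ht0 δ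
  have hq0 : 0 < q := by rw [hq]; exact Real.rpow_pos_of_pos hs0 δ
  have hpB : p * Bn < 1 := by
    have := (mul_lt_mul_of_pos_right htδ hBn0).trans_eq (inv_mul_cancel₀ hBn0.ne')
    linarith
  have hqB : q * Bm < 1 := by
    have := (mul_lt_mul_of_pos_right hsδ hBm0).trans_eq (inv_mul_cancel₀ hBm0.ne')
    linarith
  have hpthird : p < 1/3 := by nlinarith
  have hqthird : q < 1/3 := by nlinarith
  -- 3p < A and 3q < A
  have h3p : 3 * p < A := by
    have h1 : 3 * A⁻¹ * p < 1 := by nlinarith [mul_le_mul_of_nonneg_right hAn hp0.le]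
    have h2 := mul_lt_mul_of_pos_left h1 hA0
    rw [show A * (3 * A⁻¹ * p) = (A * A⁻¹) * (3 * p) by ring, mul_inv_cancel₀ hA0.ne'] at h2
    linarith
  have h3q : 3 * q < A := by
    have h1 : 3 * A⁻¹ * q < 1 := by nlinarith [mul_le_mul_of_nonneg_right hAm hq0.le]
    have h2 := mul_lt_mul_of_pos_left h1 hA0
    rw [show A * (3 * A⁻¹ * q) = (A * A⁻¹) * (3 * q) by ring, mul_inv_cancel₀ hA0.ne'] at h2
    linarith
  have ht_p2 : t ≤ p * p := by
    rw [hp, ← Real.rpow_add ht0]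
    calc t = t ^ (1:ℝ) := (Real.rpow_one t).symm
    _ ≤ t ^ (δ + δ) := Real.rpow_le_rpow_of_exponent_ge ht0 ht1.le (by linarith)
  have hs_q2 : s ≤ q * q := by
    rw [hq, ← Real.rpow_add hs0]
    calc s = s ^ (1:ℝ) := (Real.rpow_one s).symm
    _ ≤ s ^ (δ + δ) := Real.rpow_le_rpow_of_exponent_ge hs0 hs1.le (by linarith)
  have hY0 : 0 < Y := lt_of_lt_of_le (Real.rpow_pos_of_pos ht0 _) hY
  -- p ≤ Y * t ^ 2
  have hYt : p ≤ Y * t ^ 2 := by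
    have heq : t ^ (δ - 2) = p / t ^ 2 := by
      rw [Real.rpow_sub ht0, hp, show (2:ℝ) = ((2:ℕ):ℝ) by norm_num, Real.rpow_natCast]
    rw [heq, div_le_iff₀ (by positivity : (0:ℝ) < t ^ 2)] at hY
    linarith
  have ht2p4 : t ^ 2 ≤ p ^ 4 := by nlinarith
  have hYp : 1 ≤ Y * p ^ 3 := by
    have h1 : p ≤ Y * p ^ 4 := hYt.trans (by nlinarith)
    nlinarith
  -- Bq * Y ≤ (p^2/3) * Y^2  and  C ≤ (p^5/3) * Y^2
  have hBqY : Bq * Y ≤ p ^ 2 / 3 * Y ^ 2 := by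
    have h1 : 3 * Bq * p < 1 := by nlinarith
    have h2 : 3 * Bq * p ≤ Y * p ^ 3 := by linarith
    -- cancel p : 3 Bq ≤ Y p^2
    have h3 : 3 * Bq ≤ Y * p ^ 2 := by
      have := mul_le_mul_of_nonneg_right h2 (le_of_lt (inv_pos.mpr hp0))
      rw [show 3 * Bq * p * p⁻¹ = 3 * Bq * (p * p⁻¹) by ring,
        show Y * p ^ 3 * p⁻¹ = Y * p ^ 2 * (p * p⁻¹) by ring, mul_inv_cancel₀ hp0.ne'] at this
      simpa using this
    nlinarith
  have hCY : C ≤ p ^ 5 / 3 * Y ^ 2 := by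
    have h1 : 3 * C * p < 1 := by nlinarith
    have h2 : 1 ≤ Y ^ 2 * p ^ 6 := by
      nlinarith [mul_le_mul hYp hYp (by norm_num : (0:ℝ) ≤ 1) (by positivity : (0:ℝ) ≤ Y * p ^ 3)]
    -- 3 C p < 1 ≤ Y² p⁶ = (p⁵ Y²) p  ⇒  3C < p⁵ Y²
    have h3 : 3 * C * p < p ^ 5 * Y ^ 2 * p := by
      calc 3 * C * p < 1 := h1
      _ ≤ Y ^ 2 * p ^ 6 := h2
      _ = p ^ 5 * Y ^ 2 * p := by ring
    have h4 := mul_lt_mul_of_pos_right h3 (inv_pos.mpr hp0)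
    rw [show 3 * C * p * p⁻¹ = 3 * C * (p * p⁻¹) by ring,
      show p ^ 5 * Y ^ 2 * p * p⁻¹ = p ^ 5 * Y ^ 2 * (p * p⁻¹) by ring,
      mul_inv_cancel₀ hp0.ne'] at h4
    nlinarith
  have hA_le : A ≤ s + t + p ^ 2 / 3 + p ^ 5 / 3 := by
    have h1 : A * Y ^ 2 ≤ (s + t + p ^ 2 / 3 + p ^ 5 / 3) * Y ^ 2 := by nlinarith
    exact le_of_mul_le_mul_right (by nlinarith) (by positivity : (0:ℝ) < Y ^ 2)
  have hq2 : q * q ≤ q / 3 := by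
    have h := mul_le_mul_of_nonneg_right hqthird.le hq0.le
    linarith
  have hp2' : p ^ 2 ≤ p / 3 := by
    have h := mul_le_mul_of_nonneg_right hpthird.le hp0.le
    rw [pow_two]
    linarith
  have hs' : s ≤ q / 3 := hs_q2.trans hq2
  have ht' : t ≤ p / 3 := by
    have : p * p ≤ p / 3 := by rw [← pow_two]; exact hp2'
    linarith
  have hp1 : p ≤ 1 := by linarith only [hpthird]
  have hp5 : p ^ 5 ≤ p := by
    have h := pow_le_pow_of_le_one hp0.le hp1 (show 1 ≤ 5 by norm_num)
    rwa [pow_one] at h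
  linarith only [hA_le, hs', ht', hp2', hp5, h3p, h3q, hp0.le, hq0.le]


open Classical in
/-- With `S₁ = {n : r₀ ≤ n ≤ r, |y_n| < ε_n}` (archimedean absolute value, `κ = 3`),
`Σ_{k ∈ S₁} log(1/|y_k|) ≤ (1/(2-δ)) Σ_{k=r₀-1}^{r+1} log⁺|y_k|`. -/
theorem small_site_sum_estimate_arch
    (δ : ℝ) (hδ : δ ∈ Set.Ioo (0 : ℝ) (1 / 2)) (r₀ r : ℤ) (hr : r₀ ≤ r)
    (a b c y : ℤ → ℚ)
    (ha : ∀ n, r₀ - 3 ≤ n → n ≤ r + 3 → a n ≠ 0)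
    (hc : ∀ n, r₀ - 3 ≤ n → n ≤ r + 3 → c n ≠ 0)
    (hy : ∀ n, r₀ - 3 ≤ n → n ≤ r + 3 → y n ≠ 0)
    (heq : ∀ n, r₀ - 2 ≤ n → n ≤ r + 2 →
      y (n + 1) + y (n - 1) = (a n * y n ^ 2 + b n * y n + c n) / y n ^ 2) :
    ∑ k ∈ (Finset.Icc r₀ r).filter
        (fun n => |(y n : ℝ)| < epsN 3 δ (fun x => |(x : ℝ)|) a b c n),
      Real.log (1 / |(y k : ℝ)|) ≤
    (1 / (2 - δ)) * ∑ k ∈ Finset.Icc (r₀ - 1) (r + 1), max (Real.log |(y k : ℝ)|) 0 := by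
  obtain ⟨hδ0, hδh⟩ := hδ
  rw [show (1:ℝ)/2 = 1/2 from rfl] at hδh
  have hy0 : ∀ m : ℤ, r₀ - 3 ≤ m → m ≤ r + 3 → 0 < |(y m : ℝ)| := by
    intro m h1 h2
    rw [abs_pos]
    exact_mod_cast hy m h1 h2
  have hB3 : ∀ n : ℤ, 3 ≤ epsBound 3 (fun x => |(x : ℝ)|) a b c n :=
    fun n => (epsB' a b c n).1
  -- the smallness consequences
  have hsm : ∀ n : ℤ, r₀ ≤ n → n ≤ r →
      |(y n : ℝ)| < epsN 3 δ (fun x => |(x : ℝ)|) a b c n →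
      |(y n : ℝ)| ^ δ < (epsBound 3 (fun x => |(x : ℝ)|) a b c n)⁻¹ ∧ |(y n : ℝ)| < 1 := by
    intro n h1 h2 h3
    exact small_mem δ hδ0 (hB3 n) (hy0 n (by omega) (by omega)) h3
  -- one of the two neighbours of a small site is large
  have hbig : ∀ n : ℤ, r₀ ≤ n → n ≤ r →
      |(y n : ℝ)| < epsN 3 δ (fun x => |(x : ℝ)|) a b c n →
      |(y n : ℝ)| ^ (δ - 2) ≤ max |(y (n + 1) : ℝ)| |(y (n - 1) : ℝ)| := by
    intro n h1 h2 h3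
    obtain ⟨e1, e2, e3, e4, e5, e6, e7, e8, e9, e10⟩ := epsB' a b c n
    obtain ⟨htδ, ht1⟩ := hsm n h1 h2 h3
    have ht0 := hy0 n (by omega) (by omega)
    have h0 := heq n (by omega) (by omega)
    have hyn : (y n : ℝ) ≠ 0 := by exact_mod_cast hy n (by omega) (by omega)
    have hcast : (y (n + 1) : ℝ) + (y (n - 1) : ℝ)
        = ((a n : ℝ) * (y n : ℝ) ^ 2 + (b n : ℝ) * (y n : ℝ) + (c n : ℝ)) / (y n : ℝ) ^ 2 := by
      exact_mod_cast congrArg (fun q : ℚ => (q : ℝ)) h0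
    have hpoly : (c n : ℝ) = ((y (n + 1) : ℝ) + (y (n - 1) : ℝ)) * (y n : ℝ) ^ 2
        - (a n : ℝ) * (y n : ℝ) ^ 2 - (b n : ℝ) * (y n : ℝ) := by
      have h2' : ((y (n + 1) : ℝ) + (y (n - 1) : ℝ)) * (y n : ℝ) ^ 2
          = (a n : ℝ) * (y n : ℝ) ^ 2 + (b n : ℝ) * (y n : ℝ) + (c n : ℝ) := by
        rw [hcast]; field_simp
      linarith
    have habs := abs_poly_bound _ _ _ _ _ _ hpoly
    have hC0 : 0 < |(c n : ℝ)| := by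
      rw [abs_pos]; exact_mod_cast hc n (by omega) (by omega)
    exact neighbor_large δ _ _ _ _ _ _ _ hδ0 hδh ht0 ht1 htδ e4 e3 e2 hC0
      (abs_nonneg _) (abs_nonneg _) (abs_nonneg _) (abs_nonneg _) (by linarith)
  -- no two small sites at distance 2 can share the middle site as a large witness
  have hnocol : ∀ n : ℤ, r₀ ≤ n → n + 2 ≤ r →
      |(y n : ℝ)| < epsN 3 δ (fun x => |(x : ℝ)|) a b c n →
      |(y (n + 2) : ℝ)| < epsN 3 δ (fun x => |(x : ℝ)|) a b c (n + 2) →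
      ¬ (|(y n : ℝ)| ^ (δ - 2) ≤ |(y (n + 1) : ℝ)|) := by
    intro n h1 h2 h3 h4 hYb
    obtain ⟨e1, e2, e3, e4, e5, e6, e7, e8, e9, e10⟩ := epsB' a b c n
    obtain ⟨f1, f2, f3, f4, f5, f6, f7, f8, f9, f10⟩ := epsB' a b c (n + 2)
    rw [show n + 2 - 1 = n + 1 from by ring] at f10
    obtain ⟨htδ, ht1⟩ := hsm n h1 (by omega) h3
    obtain ⟨hsδ, hs1⟩ := hsm (n + 2) (by omega) h2 h4
    have ht0 := hy0 n (by omega) (by omega)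
    have hs0 := hy0 (n + 2) (by omega) (by omega)
    have hA0 : 0 < |(a (n + 1) : ℝ)| := by
      rw [abs_pos]; exact_mod_cast ha (n + 1) (by omega) (by omega)
    have h0 := heq (n + 1) (by omega) (by omega)
    rw [show n + 1 + 1 = n + 2 from by ring, show n + 1 - 1 = n from by ring] at h0
    have hyn1 : (y (n + 1) : ℝ) ≠ 0 := by exact_mod_cast hy (n + 1) (by omega) (by omega)
    have hcast : (y (n + 2) : ℝ) + (y n : ℝ)
        = ((a (n + 1) : ℝ) * (y (n + 1) : ℝ) ^ 2 + (b (n + 1) : ℝ) * (y (n + 1) : ℝ)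
          + (c (n + 1) : ℝ)) / (y (n + 1) : ℝ) ^ 2 := by
      exact_mod_cast congrArg (fun q : ℚ => (q : ℝ)) h0
    have hpoly : (a (n + 1) : ℝ) * (y (n + 1) : ℝ) ^ 2
        = ((y (n + 2) : ℝ) + (y n : ℝ)) * (y (n + 1) : ℝ) ^ 2
          - (b (n + 1) : ℝ) * (y (n + 1) : ℝ) - (c (n + 1) : ℝ) := by
      have h2' : ((y (n + 2) : ℝ) + (y n : ℝ)) * (y (n + 1) : ℝ) ^ 2
          = (a (n + 1) : ℝ) * (y (n + 1) : ℝ) ^ 2 + (b (n + 1) : ℝ) * (y (n + 1) : ℝ)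
            + (c (n + 1) : ℝ) := by
        rw [hcast]; field_simp
      linarith
    have habs := abs_poly_bound2 _ _ _ _ _ _ hpoly
    exact no_collision δ _ _ _ _ _ _ _ _ hδ0 hδh ht0 ht1 hs0 hs1 htδ hsδ e1 f1 e7 e5 e9 f10
      hA0 (abs_nonneg _) (abs_nonneg _) hYb (by linarith)
  -- the witness map
  set w : ℤ → ℤ := fun n =>
    if |(y n : ℝ)| ^ (δ - 2) ≤ |(y (n + 1) : ℝ)| then n + 1 else n - 1 with hwdef
  have hwmem : ∀ n : ℤ, w n = n + 1 ∨ w n = n - 1 := by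
    intro n
    rw [hwdef]
    dsimp only
    split_ifs <;> simp
  have hw1 : ∀ n ∈ (Finset.Icc r₀ r).filter
      (fun n => |(y n : ℝ)| < epsN 3 δ (fun x => |(x : ℝ)|) a b c n),
      |(y n : ℝ)| ^ (δ - 2) ≤ |(y (w n) : ℝ)| := by
    intro n hn
    obtain ⟨hn1, hn2⟩ := Finset.mem_filter.mp hn
    rw [Finset.mem_Icc] at hn1
    have hmax := hbig n hn1.1 hn1.2 hn2
    rw [hwdef]
    dsimp only
    split_ifs with h
    · exact h
    · exact (le_max_iff.mp hmax).resolve_left h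
  have hinj : ∀ m ∈ (Finset.Icc r₀ r).filter
      (fun n => |(y n : ℝ)| < epsN 3 δ (fun x => |(x : ℝ)|) a b c n),
      ∀ k ∈ (Finset.Icc r₀ r).filter
      (fun n => |(y n : ℝ)| < epsN 3 δ (fun x => |(x : ℝ)|) a b c n),
      w m = w k → m = k := by
    intro m hm k hk hmk
    obtain ⟨hm1, hm2⟩ := Finset.mem_filter.mp hm
    rw [Finset.mem_Icc] at hm1
    obtain ⟨hk1, hk2⟩ := Finset.mem_filter.mp hk
    rw [Finset.mem_Icc] at hk1
    by_contra hne
    rw [hwdef] at hmk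
    dsimp only at hmk
    split_ifs at hmk with h1 h2 h2
    · omega
    · have hk' : k = m + 2 := by omega
      subst hk'
      exact hnocol m hm1.1 (by omega) hm2 hk2 h1
    · have hm' : m = k + 2 := by omega
      subst hm'
      exact hnocol k hk1.1 (by omega) hk2 hm2 h2
    · omega
  have h2δ : 0 < 2 - δ := by linarith
  have hcoef : (0:ℝ) ≤ 1 / (2 - δ) := by
    apply div_nonneg <;> linarith
  calc ∑ k ∈ (Finset.Icc r₀ r).filter
        (fun n => |(y n : ℝ)| < epsN 3 δ (fun x => |(x : ℝ)|) a b c n),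
      Real.log (1 / |(y k : ℝ)|)
      ≤ ∑ k ∈ (Finset.Icc r₀ r).filter
        (fun n => |(y n : ℝ)| < epsN 3 δ (fun x => |(x : ℝ)|) a b c n),
      (1 / (2 - δ)) * max (Real.log |(y (w k) : ℝ)|) 0 := by
        apply Finset.sum_le_sum
        intro k hk
        obtain ⟨hk1, hk2⟩ := Finset.mem_filter.mp hk
        rw [Finset.mem_Icc] at hk1
        have ht0 := hy0 k (by omega) (by omega)
        have hwit := hw1 k hk
        have hlog : (δ - 2) * Real.log |(y k : ℝ)| ≤ Real.log |(y (w k) : ℝ)| := by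
          have hll := Real.log_le_log (Real.rpow_pos_of_pos ht0 (δ - 2)) hwit
          rwa [Real.log_rpow ht0] at hll
        have hmx : (δ - 2) * Real.log |(y k : ℝ)| ≤ max (Real.log |(y (w k) : ℝ)|) 0 :=
          hlog.trans (le_max_left _ _)
        rw [one_div, Real.log_inv, one_div, inv_mul_eq_div, le_div_iff₀ h2δ]
        nlinarith
    _ = (1 / (2 - δ)) * ∑ k ∈ (Finset.Icc r₀ r).filter
        (fun n => |(y n : ℝ)| < epsN 3 δ (fun x => |(x : ℝ)|) a b c n),
        max (Real.log |(y (w k) : ℝ)|) 0 := by rw [Finset.mul_sum]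
    _ ≤ (1 / (2 - δ)) * ∑ k ∈ Finset.Icc (r₀ - 1) (r + 1), max (Real.log |(y k : ℝ)|) 0 := by
        apply mul_le_mul_of_nonneg_left _ hcoef
        have himg : ∑ k ∈ (Finset.Icc r₀ r).filter
            (fun n => |(y n : ℝ)| < epsN 3 δ (fun x => |(x : ℝ)|) a b c n),
            max (Real.log |(y (w k) : ℝ)|) 0
            = ∑ j ∈ ((Finset.Icc r₀ r).filter
            (fun n => |(y n : ℝ)| < epsN 3 δ (fun x => |(x : ℝ)|) a b c n)).image w,
            max (Real.log |(y j : ℝ)|) 0 :=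
          (Finset.sum_image (f := fun j => max (Real.log |(y j : ℝ)|) 0) hinj).symm
        rw [himg]
        apply Finset.sum_le_sum_of_subset_of_nonneg
        · intro j hj
          obtain ⟨n, hn, rfl⟩ := Finset.mem_image.mp hj
          obtain ⟨hn1, _⟩ := Finset.mem_filter.mp hn
          rw [Finset.mem_Icc] at hn1
          rcases hwmem n with h | h <;> rw [h] <;> rw [Finset.mem_Icc] <;> omega
        · intro j _ _
          exact le_max_right _ _
end

section
/- Fix κ ∈ ℂ and complex numbers a_j, b_j, c_j, a_{j+1}, b_{j+1}, c_{j+1}, a_{j+2}, b_{j+2}, c_{j+2} with c_j ≠ 0. For ε ∈ ℂ \ {0} define, whenever the denominators are nonzero, y_{j+1}(ε) = (a_j ε² + b_j ε + c_j)/ε² − κ, y_{j+2}(ε) = (a_{j+1} y_{j+1}(ε)² + b_{j+1} y_{j+1}(ε) + c_{j+1})/y_{j+1}(ε)² − ε, and y_{j+3}(ε) = (a_{j+2} y_{j+2}(ε)² + b_{j+2} y_{j+2}(ε) + c_{j+2})/y_{j+2}(ε)² − y_{j+1}(ε). Then y_{j+1}(ε) and y_{j+2}(ε) are nonzero for all sufficiently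 small ε ≠ 0, so y_{j+3}(ε) is well defined there, and y_{j+3}(ε) converges to a finite limit in ℂ as ε → 0 if and only if a_{j+1} = 0, c_{j+2} = c_j, and b_{j+2} − 2b_{j+1} + b_j = 0. -/
open Filter Topology

/-- `P(e) = cj + bj e + p e²` where `p = aj - κ`. -/
noncomputable def scP (cj bj p : ℂ) (e : ℂ) : ℂ := cj + bj * e + p * e ^ 2

/-- `R(e)` such that `y₂ = e R / P²` in the confined case `a_{j+1} = 0`. -/
noncomputable def scR (cj bj p bj1 cj1 : ℂ) (e : ℂ) : ℂ :=
  bj1 * e * scP cj bj p e + cj1 * e ^ 3 - (scP cj bj p e) ^ 2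

/-- `Q(e)` such that `y₂ = Q / P²` in the generic case. -/
noncomputable def scQ (cj bj p aj1 bj1 cj1 : ℂ) (e : ℂ) : ℂ :=
  aj1 * (scP cj bj p e) ^ 2 + bj1 * e ^ 2 * scP cj bj p e + cj1 * e ^ 4
    - e * (scP cj bj p e) ^ 2

set_option maxHeartbeats 1600000 in
/-- The regular part `S` of the numerator `N = bj2 e P² R + cj2 P⁴ - P R²`. -/
noncomputable def scS (cj bj p bj1 cj1 bj2 cj2 : ℂ) (e : ℂ) : ℂ :=
  (-(10*bj^2*cj^3) + 6*bj^2*cj^2*cj2 + 8*bj*bj1*cj^3 - 4*bj*bj2*cj^3 - bj1^2*cj^3 + bj1*bj2*cj^3 - 5*cj^4*p + 4*cj^3*cj2*p)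
  + (-(10*bj^3*cj^2) + 4*bj^3*cj*cj2 + 12*bj^2*bj1*cj^2 - 6*bj^2*bj2*cj^2 - 3*bj*bj1^2*cj^2 + 3*bj*bj1*bj2*cj^2 - 20*bj*cj^3*p + 12*bj*cj^2*cj2*p + 8*bj1*cj^3*p - 4*bj2*cj^3*p + 2*cj^3*cj1)*e^1
  + (-(5*bj^4*cj) + bj^4*cj2 + 8*bj^3*bj1*cj - 4*bj^3*bj2*cj - 3*bj^2*bj1^2*cj + 3*bj^2*bj1*bj2*cj - 30*bj^2*cj^2*p + 12*bj^2*cj*cj2*p + 24*bj*bj1*cj^2*p - 12*bj*bj2*cj^2*p + 6*bj*cj^2*cj1 - 3*bj1^2*cj^2*p + 3*bj1*bj2*cj^2*p - 2*bj1*cj^2*cj1 + bj2*cj^2*cj1 - 10*cj^3*p^2 + 6*cj^2*cj2*p^2)*e^2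
  + (-bj^5 + 2*bj^4*bj1 - bj^4*bj2 - bj^3*bj1^2 + bj^3*bj1*bj2 - 20*bj^3*cj*p + 4*bj^3*cj2*p + 24*bj^2*bj1*cj*p - 12*bj^2*bj2*cj*p + 6*bj^2*cj*cj1 - 6*bj*bj1^2*cj*p + 6*bj*bj1*bj2*cj*p - 4*bj*bj1*cj*cj1 + 2*bj*bj2*cj*cj1 - 30*bj*cj^2*p^2 + 12*bj*cj*cj2*p^2 + 12*bj1*cj^2*p^2 - 6*bj2*cj^2*p^2 + 6*cj^2*cj1*p)*e^3
  + (-(5*bj^4*p) + 8*bj^3*bj1*p - 4*bj^3*bj2*p + 2*bj^3*cj1 - 3*bj^2*bj1^2*p + 3*bj^2*bj1*bj2*p - 2*bj^2*bj1*cj1 + bj^2*bj2*cj1 - 30*bj^2*cj*p^2 + 6*bj^2*cj2*p^2 + 24*bj*bj1*cj*p^2 - 12*bj*bj2*cj*p^2 + 12*bj*cj*cj1*p - 3*bj1^2*cj*p^2 + 3*bj1*bj2*cj*p^2 - 4*bj1*cj*cj1*p + 2*bj2*cj*cj1*p - 10*cj^2*p^3 - cj*cj1^2 + 4*cj*cj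2*p^3)*e^4
  + (-(10*bj^3*p^2) + 12*bj^2*bj1*p^2 - 6*bj^2*bj2*p^2 + 6*bj^2*cj1*p - 3*bj*bj1^2*p^2 + 3*bj*bj1*bj2*p^2 - 4*bj*bj1*cj1*p + 2*bj*bj2*cj1*p - 20*bj*cj*p^3 - bj*cj1^2 + 4*bj*cj2*p^3 + 8*bj1*cj*p^3 - 4*bj2*cj*p^3 + 6*cj*cj1*p^2)*e^5
  + (-(10*bj^2*p^3) + 8*bj*bj1*p^3 - 4*bj*bj2*p^3 + 6*bj*cj1*p^2 - bj1^2*p^3 + bj1*bj2*p^3 - 2*bj1*cj1*p^2 + bj2*cj1*p^2 - 5*cj*p^4 - cj1^2*p + cj2*p^4)*e^6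
  + (-(5*bj*p^4) + 2*bj1*p^4 - bj2*p^4 + 2*cj1*p^3)*e^7
  + (-p^5)*e^8

set_option maxHeartbeats 1600000 in
lemma scN_id (cj bj p bj1 cj1 bj2 cj2 e : ℂ) :
    bj2 * e * (scP cj bj p e) ^ 2 * scR cj bj p bj1 cj1 e + cj2 * (scP cj bj p e) ^ 4
      - scP cj bj p e * (scR cj bj p bj1 cj1 e) ^ 2
    = cj ^ 4 * (cj2 - cj)
      + (4*bj*cj^3*cj2 - 5*bj*cj^4 + 2*bj1*cj^4 - bj2*cj^4) * e
      + e ^ 2 * scS cj bj p bj1 cj1 bj2 cj2 e := by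
  simp only [scP, scR, scS]; ring

lemma scP_cont (cj bj p : ℂ) : Continuous (scP cj bj p) := by
  unfold scP; fun_prop

lemma scR_cont (cj bj p bj1 cj1 : ℂ) : Continuous (scR cj bj p bj1 cj1) := by
  unfold scR scP; fun_prop

lemma scQ_cont (cj bj p aj1 bj1 cj1 : ℂ) : Continuous (scQ cj bj p aj1 bj1 cj1) := by
  unfold scQ scP; fun_prop

set_option maxHeartbeats 1600000 in
lemma scS_cont (cj bj p bj1 cj1 bj2 cj2 : ℂ) : Continuous (scS cj bj p bj1 cj1 bj2 cj2) := by
  unfold scS; fun_prop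

set_option maxHeartbeats 1600000 in
/-- Singularity confinement calculation for `y_{n+1} + y_{n-1} = (a_n y_n² + b_n y_n + c_n)/y_n²`
with perturbed initial data `y_{j-1} = κ`, `y_j = ε`.  The iterates `y_{j+1}(ε)` and
`y_{j+2}(ε)` are nonzero for all sufficiently small `ε ≠ 0`, so `y_{j+3}(ε)` is well defined
there, and `y_{j+3}(ε)` converges to a finite limit as `ε → 0` if and only if
`a_{j+1} = 0`, `c_{j+2} = c_j` and `b_{j+2} - 2 b_{j+1} + b_j = 0`. -/
theorem singularity_confinement
    (κ aj bj cj aj1 bj1 cj1 aj2 bj2 cj2 : ℂ) (hcj : cj ≠ 0)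
    (y1 y2 y3 : ℂ → ℂ)
    (hy1 : ∀ ε : ℂ, ε ≠ 0 → y1 ε = (aj * ε ^ 2 + bj * ε + cj) / ε ^ 2 - κ)
    (hy2 : ∀ ε : ℂ, ε ≠ 0 → y1 ε ≠ 0 →
      y2 ε = (aj1 * (y1 ε) ^ 2 + bj1 * y1 ε + cj1) / (y1 ε) ^ 2 - ε)
    (hy3 : ∀ ε : ℂ, ε ≠ 0 → y1 ε ≠ 0 → y2 ε ≠ 0 →
      y3 ε = (aj2 * (y2 ε) ^ 2 + bj2 * y2 ε + cj2) / (y2 ε) ^ 2 - y1 ε) :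
    (∀ᶠ ε in 𝓝[≠] (0 : ℂ), y1 ε ≠ 0 ∧ y2 ε ≠ 0) ∧
      ((∃ L : ℂ, Tendsto y3 (𝓝[≠] (0 : ℂ)) (𝓝 L)) ↔
        (aj1 = 0 ∧ cj2 = cj ∧ bj2 - 2 * bj1 + bj = 0)) := by
  set p : ℂ := aj - κ with hp
  set P : ℂ → ℂ := scP cj bj p with hPdef
  have hne : ∀ᶠ ε in 𝓝[≠] (0 : ℂ), ε ≠ 0 := self_mem_nhdsWithin
  have hid : Tendsto (fun ε : ℂ => ε) (𝓝[≠] (0 : ℂ)) (𝓝 0) :=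
    tendsto_id.mono_right nhdsWithin_le_nhds
  have hPt : Tendsto P (𝓝[≠] (0 : ℂ)) (𝓝 cj) := by
    have : Tendsto P (𝓝 (0 : ℂ)) (𝓝 cj) := by
      have := (scP_cont cj bj p).tendsto 0
      simpa [scP, hPdef] using this
    exact this.mono_left nhdsWithin_le_nhds
  have hPne : ∀ᶠ ε in 𝓝[≠] (0 : ℂ), P ε ≠ 0 := hPt.eventually_ne hcj
  have hy1' : ∀ᶠ ε in 𝓝[≠] (0 : ℂ), y1 ε = P ε / ε ^ 2 := by
    filter_upwards [hne] with ε hε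
    rw [hy1 ε hε]
    simp only [hPdef, scP, hp]
    field_simp
    ring
  have hy1ne : ∀ᶠ ε in 𝓝[≠] (0 : ℂ), y1 ε ≠ 0 := by
    filter_upwards [hne, hPne, hy1'] with ε hε hP h1
    rw [h1]
    exact div_ne_zero hP (pow_ne_zero 2 hε)
  by_cases ha : aj1 = 0
  · -- confined case
    set R : ℂ → ℂ := scR cj bj p bj1 cj1 with hRdef
    set S : ℂ → ℂ := scS cj bj p bj1 cj1 bj2 cj2 with hSdef
    have hRt : Tendsto R (𝓝[≠] (0 : ℂ)) (𝓝 (-cj ^ 2)) := by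
      have : Tendsto R (𝓝 (0 : ℂ)) (𝓝 (-cj ^ 2)) := by
        have := (scR_cont cj bj p bj1 cj1).tendsto 0
        simpa [scR, scP, hRdef] using this
      exact this.mono_left nhdsWithin_le_nhds
    have hRne : ∀ᶠ ε in 𝓝[≠] (0 : ℂ), R ε ≠ 0 :=
      hRt.eventually_ne (neg_ne_zero.2 (pow_ne_zero 2 hcj))
    have hSt : Tendsto S (𝓝[≠] (0 : ℂ)) (𝓝 (S 0)) :=
      ((scS_cont cj bj p bj1 cj1 bj2 cj2).tendsto 0).mono_left nhdsWithin_le_nhds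
    have hR2t : Tendsto (fun ε => (R ε) ^ 2) (𝓝[≠] (0 : ℂ)) (𝓝 (cj ^ 4)) := by
      have h := hRt.pow 2
      have e : ((-cj ^ 2 : ℂ)) ^ 2 = cj ^ 4 := by ring
      rwa [e] at h
    have hcj4 : (cj : ℂ) ^ 4 ≠ 0 := pow_ne_zero 4 hcj
    have hy2' : ∀ᶠ ε in 𝓝[≠] (0 : ℂ), y2 ε = ε * R ε / (P ε) ^ 2 := by
      filter_upwards [hne, hPne, hy1', hy1ne] with ε hε hP h1 h1ne
      rw [hy2 ε hε h1ne, h1, ha]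
      simp only [hRdef, scR, hPdef]
      have hε2 : (ε : ℂ) ^ 2 ≠ 0 := pow_ne_zero 2 hε
      have hP' : scP cj bj p ε ≠ 0 := hP
      field_simp
      ring
    have hy2ne : ∀ᶠ ε in 𝓝[≠] (0 : ℂ), y2 ε ≠ 0 := by
      filter_upwards [hne, hPne, hRne, hy2'] with ε hε hP hR h2
      rw [h2]
      exact div_ne_zero (mul_ne_zero hε hR) (pow_ne_zero 2 hP)
    refine ⟨hy1ne.and hy2ne, ?_⟩
    set A : ℂ := cj ^ 4 * (cj2 - cj) with hAdef
    set B : ℂ := 4*bj*cj^3*cj2 - 5*bj*cj^4 + 2*bj1*cj^4 - bj2*cj^4 with hBdef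
    have hy3' : ∀ᶠ ε in 𝓝[≠] (0 : ℂ),
        y3 ε = aj2 + (A + B * ε + ε ^ 2 * S ε) / (ε ^ 2 * (R ε) ^ 2) := by
      filter_upwards [hne, hPne, hRne, hy1', hy1ne, hy2', hy2ne] with ε hε hP hR h1 h1ne h2 h2ne
      have hw : y2 ε * (P ε) ^ 2 = ε * R ε := by
        rw [h2]
        field_simp
      have key : y3 ε = aj2 + (bj2 * ε * (P ε) ^ 2 * R ε + cj2 * (P ε) ^ 4
          - P ε * (R ε) ^ 2) / (ε ^ 2 * (R ε) ^ 2) := by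
        rw [hy3 ε hε h1ne h2ne, h1, h2]
        field_simp
        ring
      rw [key, scN_id]
    constructor
    · rintro ⟨L, hL⟩
      have hc : cj2 = cj := by
        have h1 : Tendsto (fun ε => ε ^ 2 * y3 ε) (𝓝[≠] (0 : ℂ)) (𝓝 0) := by
          have := (hid.pow 2).mul hL
          simpa using this
        have h2 : Tendsto (fun ε => ε ^ 2 * y3 ε) (𝓝[≠] (0 : ℂ)) (𝓝 (A / cj ^ 4)) := by
          have heq : ∀ᶠ ε in 𝓝[≠] (0 : ℂ),
              aj2 * ε ^ 2 + (A + B * ε + ε ^ 2 * S ε) / (R ε) ^ 2 = ε ^ 2 * y3 ε := by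
            filter_upwards [hne, hRne, hy3'] with ε hε hR h3
            rw [h3]
            field_simp
          have ht : Tendsto (fun ε => aj2 * ε ^ 2 + (A + B * ε + ε ^ 2 * S ε) / (R ε) ^ 2)
              (𝓝[≠] (0 : ℂ)) (𝓝 (aj2 * 0 ^ 2 + (A + B * 0 + 0 ^ 2 * S 0) / cj ^ 4)) := by
            exact ((tendsto_const_nhds.mul (hid.pow 2)).add
              (((tendsto_const_nhds.add (tendsto_const_nhds.mul hid)).add
                ((hid.pow 2).mul hSt)).div hR2t hcj4))
          simp only [ne_eq, OfNat.ofNat_ne_zero, not_false_eq_true, zero_pow, mul_zero,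
            add_zero, zero_mul, zero_add] at ht
          exact ht.congr' heq
        have hA0 : A / cj ^ 4 = 0 := tendsto_nhds_unique h2 h1
        have : A = 0 := by
          field_simp at hA0
          simpa using hA0
        rw [hAdef] at this
        rcases mul_eq_zero.1 this with h | h
        · exact absurd h hcj4
        · exact sub_eq_zero.1 h
      have hA0 : A = 0 := by rw [hAdef, hc]; ring
      have hb : bj2 - 2 * bj1 + bj = 0 := by
        have h1 : Tendsto (fun ε => ε * y3 ε) (𝓝[≠] (0 : ℂ)) (𝓝 0) := by
          have := hid.mul hL
          simpa using this
        have h2 : Tendsto (fun ε => ε * y3 ε) (𝓝[≠] (0 : ℂ)) (𝓝 (B / cj ^ 4)) := by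
          have heq : ∀ᶠ ε in 𝓝[≠] (0 : ℂ),
              aj2 * ε + (B + ε * S ε) / (R ε) ^ 2 = ε * y3 ε := by
            filter_upwards [hne, hRne, hy3'] with ε hε hR h3
            rw [h3, hA0]
            field_simp
            ring
          have ht : Tendsto (fun ε => aj2 * ε + (B + ε * S ε) / (R ε) ^ 2)
              (𝓝[≠] (0 : ℂ)) (𝓝 (aj2 * 0 + (B + 0 * S 0) / cj ^ 4)) :=
            (tendsto_const_nhds.mul hid).add
              ((tendsto_const_nhds.add (hid.mul hSt)).div hR2t hcj4)
          simp only [mul_zero, add_zero, zero_mul, zero_add] at ht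
          exact ht.congr' heq
        have hB0 : B / cj ^ 4 = 0 := tendsto_nhds_unique h2 h1
        have hB0' : B = 0 := by
          field_simp at hB0
          simpa using hB0
        have h4 : cj ^ 4 * (bj2 - 2 * bj1 + bj) = 0 := by
          rw [hBdef, hc] at hB0'
          linear_combination -hB0'
        rcases mul_eq_zero.1 h4 with h | h
        · exact absurd h hcj4
        · exact h
      exact ⟨ha, hc, hb⟩
    · rintro ⟨-, hc, hb⟩
      have hA0 : A = 0 := by rw [hAdef, hc]; ring
      have hB0 : B = 0 := by
        rw [hBdef, hc]
        have : bj2 = 2 * bj1 - bj := by linear_combination hb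
        rw [this]; ring
      refine ⟨aj2 + S 0 / cj ^ 4, ?_⟩
      have heq : ∀ᶠ ε in 𝓝[≠] (0 : ℂ), aj2 + S ε / (R ε) ^ 2 = y3 ε := by
        filter_upwards [hne, hRne, hy3'] with ε hε hR h3
        rw [h3, hA0, hB0]
        field_simp
        ring
      have ht : Tendsto (fun ε => aj2 + S ε / (R ε) ^ 2) (𝓝[≠] (0 : ℂ))
          (𝓝 (aj2 + S 0 / cj ^ 4)) :=
        tendsto_const_nhds.add (hSt.div hR2t hcj4)
      exact ht.congr' heq
  · -- generic case aj1 ≠ 0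
    set Q : ℂ → ℂ := scQ cj bj p aj1 bj1 cj1 with hQdef
    have hQt : Tendsto Q (𝓝[≠] (0 : ℂ)) (𝓝 (aj1 * cj ^ 2)) := by
      have : Tendsto Q (𝓝 (0 : ℂ)) (𝓝 (aj1 * cj ^ 2)) := by
        have := (scQ_cont cj bj p aj1 bj1 cj1).tendsto 0
        simpa [scQ, scP, hQdef] using this
      exact this.mono_left nhdsWithin_le_nhds
    have hcj2 : (cj : ℂ) ^ 2 ≠ 0 := pow_ne_zero 2 hcj
    have haQ : aj1 * cj ^ 2 ≠ 0 := mul_ne_zero ha hcj2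
    have hy2' : ∀ᶠ ε in 𝓝[≠] (0 : ℂ), y2 ε = Q ε / (P ε) ^ 2 := by
      filter_upwards [hne, hPne, hy1', hy1ne] with ε hε hP h1 h1ne
      rw [hy2 ε hε h1ne, h1]
      simp only [hQdef, scQ, hPdef]
      have hε2 : (ε : ℂ) ^ 2 ≠ 0 := pow_ne_zero 2 hε
      have hP' : scP cj bj p ε ≠ 0 := hP
      field_simp
    have hQne : ∀ᶠ ε in 𝓝[≠] (0 : ℂ), Q ε ≠ 0 := hQt.eventually_ne haQ
    have hy2ne : ∀ᶠ ε in 𝓝[≠] (0 : ℂ), y2 ε ≠ 0 := by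
      filter_upwards [hPne, hQne, hy2'] with ε hP hQ h2
      rw [h2]
      exact div_ne_zero hQ (pow_ne_zero 2 hP)
    have hy2t : Tendsto y2 (𝓝[≠] (0 : ℂ)) (𝓝 aj1) := by
      have := hQt.div (hPt.pow 2) hcj2
      have h := this.congr' (hy2'.mono fun ε h => h.symm)
      rwa [mul_div_assoc, div_self hcj2, mul_one] at h
    refine ⟨hy1ne.and hy2ne, ?_⟩
    constructor
    · rintro ⟨L, hL⟩
      exfalso
      have ha2 : (aj1 : ℂ) ^ 2 ≠ 0 := pow_ne_zero 2 ha
      have hy1t : Tendsto y1 (𝓝[≠] (0 : ℂ))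
          (𝓝 ((aj2 * aj1 ^ 2 + bj2 * aj1 + cj2) / aj1 ^ 2 - L)) := by
        have heq : ∀ᶠ ε in 𝓝[≠] (0 : ℂ),
            (aj2 * (y2 ε) ^ 2 + bj2 * y2 ε + cj2) / (y2 ε) ^ 2 - y3 ε = y1 ε := by
          filter_upwards [hne, hy1ne, hy2ne] with ε hε h1 h2
          rw [hy3 ε hε h1 h2]
          ring
        have ht : Tendsto (fun ε => (aj2 * (y2 ε) ^ 2 + bj2 * y2 ε + cj2) / (y2 ε) ^ 2 - y3 ε)
            (𝓝[≠] (0 : ℂ)) (𝓝 ((aj2 * aj1 ^ 2 + bj2 * aj1 + cj2) / aj1 ^ 2 - L)) :=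
          ((((tendsto_const_nhds.mul (hy2t.pow 2)).add
            (tendsto_const_nhds.mul hy2t)).add tendsto_const_nhds).div
            (hy2t.pow 2) ha2).sub hL
        exact ht.congr' heq
      have h0 : Tendsto (fun ε => ε ^ 2 * y1 ε) (𝓝[≠] (0 : ℂ)) (𝓝 0) := by
        have := (hid.pow 2).mul hy1t
        simpa using this
      have hP0 : Tendsto P (𝓝[≠] (0 : ℂ)) (𝓝 0) := by
        have heq : ∀ᶠ ε in 𝓝[≠] (0 : ℂ), ε ^ 2 * y1 ε = P ε := by
          filter_upwards [hne, hy1'] with ε hε h1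
          rw [h1]
          field_simp
        exact h0.congr' heq
      exact hcj (tendsto_nhds_unique hPt hP0)
    · rintro ⟨h, -⟩
      exact absurd h ha
end

section
/- Let y be a meromorphic function on ℂ, not identically zero, satisfying y(z+1) + y(z−1) = (a(z) y(z)² + b(z) y(z) + c(z))/y(z)² as an identity of meromorphic functions, where a, b, c are rational functions. Let ẑ ∈ ℂ be a point at which a, b, c are all analytic with c(ẑ) ≠ 0, and suppose y has a zero of order k ≥ 1 at ẑ. Then the function z ↦ y(z+1) has a pole of order at least 2k at ẑ, or the function z ↦ y(z−1) has a pole of order at least 2k at ẑ. -/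
/-- Two functions agree off some countable set; for meromorphic functions on `ℂ` this is
equality as meromorphic functions. -/
def EqOffCountable (f g : ℂ → ℂ) : Prop :=
  ∃ S : Set ℂ, S.Countable ∧ ∀ z ∉ S, f z = g z

open Classical in
/-- The order of a meromorphic function at a point: positive order `k` is a zero of order
`k`, negative order `-m` is a pole of order `m` (junk value `0` if `f` is not meromorphic
at the point). -/
noncomputable def meroOrder (f : ℂ → ℂ) (z : ℂ) : WithTop ℤ :=
  if h : MeromorphicAt f z then meromorphicOrderAt f z else 0

open Filter Topology

lemma freq_compl_countable {S : Set ℂ} (hS : S.Countable) (x : ℂ) :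
    ∃ᶠ z in 𝓝[≠] x, z ∉ S := by
  rw [Filter.frequently_iff]
  intro U hU
  rw [mem_nhdsWithin] at hU
  obtain ⟨V, hVo, hxV, hVU⟩ := hU
  have hd : Dense (S ∪ {x} : Set ℂ)ᶜ :=
    Set.Countable.dense_compl ℂ (hS.union (Set.countable_singleton x))
  obtain ⟨z, hz, hzV⟩ := hd.exists_mem_open hVo ⟨x, hxV⟩
  have hzS : z ∉ S := fun h' => hz (Set.mem_union_left _ h')
  have hzx : z ≠ x := fun h' => hz (Set.mem_union_right _ (by simp [h']))
  exact ⟨z, hVU ⟨hzV, hzx⟩, hzS⟩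

lemma mero_eq_punctured {f g : ℂ → ℂ} {x : ℂ} (hf : MeromorphicAt f x)
    (hg : MeromorphicAt g x) {S : Set ℂ} (hS : S.Countable) (h : ∀ z ∉ S, f z = g z) :
    f =ᶠ[𝓝[≠] x] g := by
  have hd := hf.sub hg
  rcases eq_or_ne (meromorphicOrderAt (f - g) x) ⊤ with ho | ho
  · filter_upwards [meromorphicOrderAt_eq_top_iff.mp ho] with z hz
    exact sub_eq_zero.mp hz
  · obtain ⟨n, hn⟩ := WithTop.ne_top_iff_exists.mp ho
    obtain ⟨u, hu_an, hu_ne, hu_eq⟩ := (meromorphicOrderAt_eq_int_iff hd (n := n)).mp hn.symm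
    have hu' : ∀ᶠ z in 𝓝 x, u z ≠ 0 := hu_an.continuousAt.eventually_ne hu_ne
    have hne : ∀ᶠ z in 𝓝[≠] x, f z - g z ≠ 0 := by
      filter_upwards [hu_eq, hu'.filter_mono nhdsWithin_le_nhds, self_mem_nhdsWithin]
        with z h1 h2 h3
      have : (f - g) z ≠ 0 := by
        rw [h1]
        exact mul_ne_zero (zpow_ne_zero _ (sub_ne_zero.mpr h3)) h2
      exact this
    obtain ⟨z, hz1, hz2⟩ := (hne.and_frequently (freq_compl_countable hS x)).exists
    exact absurd (sub_eq_zero.mpr (h z hz2)) hz1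

lemma le_order_of_rep {f : ℂ → ℂ} {x : ℂ} (hf : MeromorphicAt f x) {n : ℤ} {G : ℂ → ℂ}
    (hG : AnalyticAt ℂ G x) (hrep : ∀ᶠ z in 𝓝[≠] x, f z = (z - x) ^ n • G z) :
    (n : WithTop ℤ) ≤ meromorphicOrderAt f x := by
  rcases eq_or_ne (analyticOrderAt G x) ⊤ with ho | ho
  · have hG0 : ∀ᶠ z in 𝓝 x, G z = 0 := analyticOrderAt_eq_top.mp ho
    have : meromorphicOrderAt f x = ⊤ := by
      rw [meromorphicOrderAt_eq_top_iff]
      filter_upwards [hrep, hG0.filter_mono nhdsWithin_le_nhds] with z h1 h2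
      simp [h1, h2]
    simp [this]
  · obtain ⟨m, hm⟩ := WithTop.ne_top_iff_exists.mp ho
    obtain ⟨u, hu, hune, hueq⟩ := (hG.analyticOrderAt_eq_natCast (n := m)).mp (by rw [← hm]; rfl)
    have : meromorphicOrderAt f x = ((n + m : ℤ) : WithTop ℤ) := by
      rw [meromorphicOrderAt_eq_int_iff hf]
      refine ⟨u, hu, hune, ?_⟩
      filter_upwards [hrep, hueq.filter_mono nhdsWithin_le_nhds, self_mem_nhdsWithin]
        with z h1 h2 h3
      have hz : z - x ≠ 0 := sub_ne_zero.mpr h3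
      rw [h1, h2, smul_eq_mul, smul_eq_mul, smul_eq_mul, ← mul_assoc,
        ← zpow_natCast (z - x) m, ← zpow_add₀ hz]
    rw [this]
    exact_mod_cast by omega
  
lemma rep_of_le_order {f : ℂ → ℂ} {x : ℂ} (hf : MeromorphicAt f x) {n : ℤ}
    (h : (n : WithTop ℤ) ≤ meromorphicOrderAt f x) :
    ∃ G : ℂ → ℂ, AnalyticAt ℂ G x ∧ ∀ᶠ z in 𝓝[≠] x, f z = (z - x) ^ n • G z := by
  rcases eq_or_ne (meromorphicOrderAt f x) ⊤ with ho | ho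
  · refine ⟨fun _ => 0, analyticAt_const, ?_⟩
    filter_upwards [meromorphicOrderAt_eq_top_iff.mp ho] with z hz
    simp [hz]
  · obtain ⟨m, hm⟩ := WithTop.ne_top_iff_exists.mp ho
    obtain ⟨g, hg, _, hgeq⟩ := (meromorphicOrderAt_eq_int_iff hf (n := m)).mp hm.symm
    have hnm : n ≤ m := by
      rw [← hm] at h
      exact_mod_cast h
    refine ⟨fun z => (z - x) ^ (m - n).toNat * g z,
      ((analyticAt_id.sub analyticAt_const).pow _).mul hg, ?_⟩
    filter_upwards [hgeq, self_mem_nhdsWithin] with z h1 h2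
    have hz : z - x ≠ 0 := sub_ne_zero.mpr h2
    have hmn : n + (m - n) = m := by omega
    rw [h1, smul_eq_mul, smul_eq_mul, ← mul_assoc,
      ← zpow_natCast (z - x) (m - n).toNat, Int.toNat_of_nonneg (by omega),
      ← zpow_add₀ hz, hmn]

lemma order_add_ge {f g : ℂ → ℂ} {x : ℂ} (hf : MeromorphicAt f x) (hg : MeromorphicAt g x)
    (hfg : MeromorphicAt (fun z => f z + g z) x) {n : ℤ}
    (h1 : (n : WithTop ℤ) ≤ meromorphicOrderAt f x) (h2 : (n : WithTop ℤ) ≤ meromorphicOrderAt g x) :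
    (n : WithTop ℤ) ≤ meromorphicOrderAt (fun z => f z + g z) x := by
  obtain ⟨F, hF, hFe⟩ := rep_of_le_order hf h1
  obtain ⟨G, hG, hGe⟩ := rep_of_le_order hg h2
  refine le_order_of_rep hfg (G := fun z => F z + G z) (hF.add hG) ?_
  filter_upwards [hFe, hGe] with z e1 e2
  simp only [e1, e2, smul_eq_mul]
  ring

lemma add_one_le_of_lt' {n : ℤ} {o : WithTop ℤ} (h : (n : WithTop ℤ) < o) :
    ((n + 1 : ℤ) : WithTop ℤ) ≤ o := by
  cases o with
  | top => exact le_top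
  | coe m =>
      have : n < m := by exact_mod_cast h
      exact_mod_cast by omega

lemma meromorphicAt_translate {y : ℂ → ℂ} {x t : ℂ} (h : MeromorphicAt y (x + t)) :
    MeromorphicAt (fun z => y (z + t)) x := by
  obtain ⟨n, hn⟩ := h
  refine ⟨n, ?_⟩
  have hadd : AnalyticAt ℂ (fun z : ℂ => z + t) x := analyticAt_id.add analyticAt_const
  have hcomp := AnalyticAt.comp (f := fun z : ℂ => z + t) (x := x) hn hadd
  have heq : ((fun z => (z - (x + t)) ^ n • y z) ∘ fun z : ℂ => z + t) =
      fun z : ℂ => (z - x) ^ n • y (z + t) := by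
    funext z
    simp [Function.comp_def, add_sub_add_right_eq_sub]
  rwa [heq] at hcomp

lemma ratfunc_analyticAt (a : RatFunc ℂ) {x : ℂ} (h : a.denom.eval x ≠ 0) :
    AnalyticAt ℂ (fun z => a.eval (RingHom.id ℂ) z) x := by
  have hnum : AnalyticAt ℂ (fun z => a.num.eval z) x := by
    have := (analyticAt_id (𝕜 := ℂ) (z := x)).aeval_polynomial a.num
    simpa [Polynomial.coe_aeval_eq_eval] using this
  have hden : AnalyticAt ℂ (fun z => a.denom.eval z) x := by
    have := (analyticAt_id (𝕜 := ℂ) (z := x)).aeval_polynomial a.denom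
    simpa [Polynomial.coe_aeval_eq_eval] using this
  exact hnum.div hden h

/-- If a meromorphic `y ≢ 0` solves `y(z+1) + y(z-1) = (a y² + b y + c)/y²` with rational
coefficients and has a zero of order `k ≥ 1` at a point `ẑ` where `a`, `b`, `c` are analytic
and `c(ẑ) ≠ 0`, then `z ↦ y(z+1)` or `z ↦ y(z-1)` has a pole of order at least `2k` at `ẑ`. -/
theorem zero_forces_neighbouring_pole
    (y : ℂ → ℂ) (hy : MeromorphicOn y Set.univ)
    (hynz : ¬ EqOffCountable y (fun _ => 0))
    (a b c : RatFunc ℂ)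
    (heq : EqOffCountable (fun z => y (z + 1) + y (z - 1))
      (fun z => (a.eval (RingHom.id ℂ) z * y z ^ 2 + b.eval (RingHom.id ℂ) z * y z +
        c.eval (RingHom.id ℂ) z) / y z ^ 2))
    (zhat : ℂ)
    (haz : a.denom.eval zhat ≠ 0) (hbz : b.denom.eval zhat ≠ 0)
    (hcz : c.denom.eval zhat ≠ 0) (hcval : c.eval (RingHom.id ℂ) zhat ≠ 0)
    (k : ℕ) (hk : 1 ≤ k) (hord : meroOrder y zhat = ((k : ℤ) : WithTop ℤ)) :
    meroOrder (fun z => y (z + 1)) zhat ≤ ((-(2 * (k : ℤ)) : ℤ) : WithTop ℤ) ∨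
      meroOrder (fun z => y (z - 1)) zhat ≤ ((-(2 * (k : ℤ)) : ℤ) : WithTop ℤ) := by
  have hyz : MeromorphicAt y zhat := hy zhat (Set.mem_univ _)
  have mg : MeromorphicAt (fun z => y (z + 1)) zhat :=
    meromorphicAt_translate (hy (zhat + 1) (Set.mem_univ _))
  have mh : MeromorphicAt (fun z => y (z - 1)) zhat := by
    have := meromorphicAt_translate (t := -1) (hy (zhat + -1) (Set.mem_univ _))
    simpa [sub_eq_add_neg] using this
  have hord' : meromorphicOrderAt y zhat = ((k : ℤ) : WithTop ℤ) := by
    rw [meroOrder, dif_pos hyz] at hord; exact hord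
  obtain ⟨g₀, hg₀, hg₀ne, hyeq⟩ := (meromorphicOrderAt_eq_int_iff hyz (n := k)).mp hord'
  have hA := ratfunc_analyticAt a haz
  have hB := ratfunc_analyticAt b hbz
  have hC := ratfunc_analyticAt c hcz
  set n : ℤ := -(2 * (k : ℤ)) with hn
  set H : ℂ → ℂ := fun z =>
    (a.eval (RingHom.id ℂ) z * ((z - zhat) ^ k * g₀ z) ^ 2 +
      b.eval (RingHom.id ℂ) z * ((z - zhat) ^ k * g₀ z) + c.eval (RingHom.id ℂ) z) / g₀ z ^ 2
    with hHdef
  have hsub : AnalyticAt ℂ (fun z : ℂ => z - zhat) zhat := analyticAt_id.sub analyticAt_const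
  have hP : AnalyticAt ℂ (fun z : ℂ => (z - zhat) ^ k * g₀ z) zhat := (hsub.pow k).mul hg₀
  have hN : AnalyticAt ℂ (fun z =>
      a.eval (RingHom.id ℂ) z * ((z - zhat) ^ k * g₀ z) ^ 2 +
        b.eval (RingHom.id ℂ) z * ((z - zhat) ^ k * g₀ z) + c.eval (RingHom.id ℂ) z) zhat :=
    ((hA.mul (hP.pow 2)).add (hB.mul hP)).add hC
  have hH : AnalyticAt ℂ H zhat := hN.div (hg₀.pow 2) (pow_ne_zero 2 hg₀ne)
  have hHne : H zhat ≠ 0 := by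
    have hz0 : H zhat = c.eval (RingHom.id ℂ) zhat / g₀ zhat ^ 2 := by
      simp [hHdef, sub_self, zero_pow (by omega : k ≠ 0)]
    rw [hz0]
    exact div_ne_zero hcval (pow_ne_zero 2 hg₀ne)
  have hg₀ev : ∀ᶠ z in 𝓝 zhat, g₀ z ≠ 0 := hg₀.continuousAt.eventually_ne hg₀ne
  have hmodel : ∀ᶠ z in 𝓝[≠] zhat,
      (a.eval (RingHom.id ℂ) z * y z ^ 2 + b.eval (RingHom.id ℂ) z * y z +
        c.eval (RingHom.id ℂ) z) / y z ^ 2 = (z - zhat) ^ n • H z := by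
    filter_upwards [hyeq, hg₀ev.filter_mono nhdsWithin_le_nhds, self_mem_nhdsWithin]
      with z h1 h2 h3
    have ht : z - zhat ≠ 0 := sub_ne_zero.mpr h3
    have hy' : y z = (z - zhat) ^ k * g₀ z := by
      rw [h1, smul_eq_mul, zpow_natCast]
    have hzp : (z - zhat) ^ n = ((z - zhat) ^ (2 * k) : ℂ)⁻¹ := by
      rw [hn, zpow_neg, show (2 * (k : ℤ)) = ((2 * k : ℕ) : ℤ) by push_cast; ring,
        zpow_natCast]
    rw [hy', smul_eq_mul, hzp, hHdef]
    field_simp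
    ring
  have mModel : MeromorphicAt (fun z => (z - zhat) ^ n • H z) zhat :=
    (((MeromorphicAt.id zhat).sub (MeromorphicAt.const zhat zhat)).zpow n).smul
      hH.meromorphicAt
  have mRHS : MeromorphicAt
      (fun z => (a.eval (RingHom.id ℂ) z * y z ^ 2 + b.eval (RingHom.id ℂ) z * y z +
        c.eval (RingHom.id ℂ) z) / y z ^ 2) zhat :=
    mModel.congr (Filter.EventuallyEq.symm hmodel)
  have mLHS : MeromorphicAt (fun z => y (z + 1) + y (z - 1)) zhat := mg.add mh
  obtain ⟨S, hS, hSeq⟩ := heq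
  have hLR := mero_eq_punctured mLHS mRHS hS hSeq
  have hordLHS : meromorphicOrderAt (fun z => y (z + 1) + y (z - 1)) zhat = (n : WithTop ℤ) := by
    rw [meromorphicOrderAt_eq_int_iff mLHS]
    refine ⟨H, hH, hHne, ?_⟩
    filter_upwards [hLR, hmodel] with z e1 e2
    rw [e1] at *
    exact e2
  by_contra hcon
  push_neg at hcon
  obtain ⟨h1, h2⟩ := hcon
  rw [meroOrder, dif_pos mg] at h1
  rw [meroOrder, dif_pos mh] at h2
  have h1' := add_one_le_of_lt' h1
  have h2' := add_one_le_of_lt' h2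
  have hge := order_add_ge mg mh mLHS h1' h2'
  rw [hordLHS] at hge
  have : (n + 1 : ℤ) ≤ n := by exact_mod_cast hge
  omega
end

section
/- Let y be a meromorphic function on ℂ satisfying y(z+1) + y(z−1) = (a(z) y(z)² + b(z) y(z) + c(z))/y(z)² as an identity of meromorphic functions, where a, b, c are rational functions. Let ẑ ∈ ℂ be such that a, b, c are analytic at ẑ + 1, y has a zero of order k ≥ 1 at ẑ, and y (as a function of z) has a pole of order exactly 2k at ẑ + 1. Then the function z ↦ y(z+2) − a(z+1) has a zero of order exactly k at ẑ; in particular y is analytic at ẑ + 2 with value y(ẑ+2) = a(ẑ+1). -/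
open Filter Topology

noncomputable def MeromorphicAt.order {f : ℂ → ℂ} {x : ℂ} (_hf : MeromorphicAt f x) :
    WithTop ℤ := meromorphicOrderAt f x

lemma MeromorphicAt.order_eq_int_iff {f : ℂ → ℂ} {x : ℂ} (hf : MeromorphicAt f x) (n : ℤ) :
    hf.order = n ↔
      ∃ g : ℂ → ℂ, AnalyticAt ℂ g x ∧ g x ≠ 0 ∧ ∀ᶠ z in 𝓝[≠] x, f z = (z - x) ^ n • g z :=
  meromorphicOrderAt_eq_int_iff hf

lemma MeromorphicAt.order_eq_top_iff {f : ℂ → ℂ} {x : ℂ} (hf : MeromorphicAt f x) :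
    hf.order = ⊤ ↔ ∀ᶠ z in 𝓝[≠] x, f z = 0 :=
  meromorphicOrderAt_eq_top_iff

noncomputable def AnalyticAt.order {f : ℂ → ℂ} {x : ℂ} (_hf : AnalyticAt ℂ f x) : WithTop ℕ :=
  analyticOrderAt f x

lemma AnalyticAt.meromorphicAt_order {f : ℂ → ℂ} {x : ℂ} (hf : AnalyticAt ℂ f x) :
    hf.meromorphicAt.order = WithTop.map (fun n : ℕ => (n : ℤ)) hf.order :=
  hf.meromorphicOrderAt_eq

lemma AnalyticAt.order_eq_nat_iff {f : ℂ → ℂ} {x : ℂ} (hf : AnalyticAt ℂ f x) (n : ℕ) :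
    hf.order = n ↔
      ∃ g : ℂ → ℂ, AnalyticAt ℂ g x ∧ g x ≠ 0 ∧ ∀ᶠ z in 𝓝 x, f z = (z - x) ^ n • g z :=
  hf.analyticOrderAt_eq_natCast

namespace ZPZ

variable {x : ℂ} {f g : ℂ → ℂ}

lemma nhdsNE_not_countable {t : Set ℂ} (ht : t ∈ 𝓝[≠] x) (hc : t.Countable) : False := by
  rw [mem_nhdsWithin] at ht
  obtain ⟨U, hUo, hxU, hsub⟩ := ht
  have hUc : U.Countable := by
    refine (hc.insert x).mono fun z hz => ?_
    rcases eq_or_ne z x with rfl | hne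
    · exact Set.mem_insert _ _
    · exact Set.mem_insert_of_mem _ (hsub ⟨hz, hne⟩)
  obtain ⟨z, hz1, hz2⟩ := (hUc.dense_compl ℂ).inter_open_nonempty U hUo ⟨x, hxU⟩
  exact hz2 hz1

lemma eventually_ne (hf : MeromorphicAt f x) {n : ℤ} (h : hf.order = (n : WithTop ℤ)) :
    ∀ᶠ z in 𝓝[≠] x, f z ≠ 0 := by
  obtain ⟨g, hg, hgx, hfg⟩ := (hf.order_eq_int_iff n).mp h
  have hgne : ∀ᶠ z in 𝓝[≠] x, g z ≠ 0 :=
    (hg.continuousAt.eventually_ne hgx).filter_mono nhdsWithin_le_nhds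
  filter_upwards [hfg, hgne, eventually_mem_nhdsWithin] with z h1 h2 h3
  rw [h1, smul_eq_mul]
  exact mul_ne_zero (zpow_ne_zero _ (sub_ne_zero.mpr (Set.mem_compl_singleton_iff.mp h3))) h2

lemma order_congr (hf : MeromorphicAt f x) (hg : MeromorphicAt g x)
    (h : f =ᶠ[𝓝[≠] x] g) : hf.order = hg.order := by
  rcases eq_or_ne hf.order ⊤ with ht | hne
  · rw [ht, eq_comm, hg.order_eq_top_iff]
    filter_upwards [hf.order_eq_top_iff.mp ht, h] with z h1 h2
    rw [← h2]; exact h1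
  · obtain ⟨n, hn⟩ := WithTop.ne_top_iff_exists.mp hne
    rw [← hn, eq_comm, hg.order_eq_int_iff]
    obtain ⟨G, hG, hGx, hfG⟩ := (hf.order_eq_int_iff n).mp hn.symm
    exact ⟨G, hG, hGx, by filter_upwards [hfG, h] with z h1 h2; rw [← h2]; exact h1⟩

lemma order_mul (hf : MeromorphicAt f x) (hg : MeromorphicAt g x) :
    (hf.mul hg).order = hf.order + hg.order := by
  rcases eq_or_ne hf.order ⊤ with ht | hne
  · rw [ht, top_add, (hf.mul hg).order_eq_top_iff]
    filter_upwards [hf.order_eq_top_iff.mp ht] with z h1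
    simp [Pi.mul_apply, h1]
  rcases eq_or_ne hg.order ⊤ with ht2 | hne2
  · rw [ht2, add_top, (hf.mul hg).order_eq_top_iff]
    filter_upwards [hg.order_eq_top_iff.mp ht2] with z h1
    simp [Pi.mul_apply, h1]
  obtain ⟨n, hn⟩ := WithTop.ne_top_iff_exists.mp hne
  obtain ⟨m, hm⟩ := WithTop.ne_top_iff_exists.mp hne2
  obtain ⟨F, hF, hFx, hfF⟩ := (hf.order_eq_int_iff n).mp hn.symm
  obtain ⟨G, hG, hGx, hgG⟩ := (hg.order_eq_int_iff m).mp hm.symm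
  rw [← hn, ← hm, ← WithTop.coe_add, (hf.mul hg).order_eq_int_iff]
  refine ⟨F * G, hF.mul hG, mul_ne_zero hFx hGx, ?_⟩
  filter_upwards [hfF, hgG, eventually_mem_nhdsWithin] with z h1 h2 h3
  have hzx : z - x ≠ 0 := sub_ne_zero.mpr (Set.mem_compl_singleton_iff.mp h3)
  simp only [Pi.mul_apply, h1, h2, smul_eq_mul]
  rw [zpow_add₀ hzx]; ring

lemma order_neg (hf : MeromorphicAt f x) : hf.neg.order = hf.order := by
  rcases eq_or_ne hf.order ⊤ with ht | hne
  · rw [ht, hf.neg.order_eq_top_iff]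
    filter_upwards [hf.order_eq_top_iff.mp ht] with z h1
    simp [Pi.neg_apply, h1]
  · obtain ⟨n, hn⟩ := WithTop.ne_top_iff_exists.mp hne
    rw [← hn, hf.neg.order_eq_int_iff]
    obtain ⟨F, hF, hFx, hfF⟩ := (hf.order_eq_int_iff n).mp hn.symm
    refine ⟨-F, hF.neg, neg_ne_zero.mpr hFx, ?_⟩
    filter_upwards [hfF] with z h1
    simp [Pi.neg_apply, h1]

lemma order_sub_zpow (x : ℂ) (n : ℤ) (h : MeromorphicAt (fun z : ℂ => (z - x) ^ n) x) :
    h.order = (n : WithTop ℤ) := by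
  rw [h.order_eq_int_iff]
  exact ⟨fun _ => 1, analyticAt_const, one_ne_zero, by filter_upwards with z; simp⟩

lemma analytic_order_nonneg (hf : AnalyticAt ℂ f x) :
    (0 : WithTop ℤ) ≤ hf.meromorphicAt.order := by
  rw [hf.meromorphicAt_order]
  rcases eq_or_ne hf.order ⊤ with ht | hne
  · rw [ht, WithTop.map_top]; exact le_top
  · obtain ⟨m, hm⟩ := WithTop.ne_top_iff_exists.mp hne
    rw [← hm, WithTop.map_coe]
    exact_mod_cast Int.ofNat_nonneg m

lemma analytic_order_pos (hf : AnalyticAt ℂ f x) (h0 : f x = 0) :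
    (1 : WithTop ℤ) ≤ hf.meromorphicAt.order := by
  rw [hf.meromorphicAt_order]
  rcases eq_or_ne hf.order ⊤ with ht | hne
  · rw [ht, WithTop.map_top]; exact le_top
  · obtain ⟨m, hm⟩ := WithTop.ne_top_iff_exists.mp hne
    have hm0 : m ≠ 0 := by
      rintro rfl
      obtain ⟨G, hG, hGx, hfG⟩ := (hf.order_eq_nat_iff 0).mp hm.symm
      have h2 := hfG.self_of_nhds
      rw [h0] at h2
      simp at h2
      exact hGx h2.symm
    rw [← hm, WithTop.map_coe]
    exact_mod_cast (by omega : (1 : ℤ) ≤ (m : ℤ))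

lemma le_order_iff (hf : MeromorphicAt f x) (n : ℤ) :
    (n : WithTop ℤ) ≤ hf.order ↔
      ∃ h : ℂ → ℂ, AnalyticAt ℂ h x ∧ ∀ᶠ z in 𝓝[≠] x, f z = (z - x) ^ n * h z := by
  constructor
  · intro hle
    rcases eq_or_ne hf.order ⊤ with ht | hne
    · refine ⟨fun _ => 0, analyticAt_const, ?_⟩
      filter_upwards [hf.order_eq_top_iff.mp ht] with z h1
      simp [h1]
    · obtain ⟨m, hm⟩ := WithTop.ne_top_iff_exists.mp hne
      obtain ⟨G, hG, hGx, hfG⟩ := (hf.order_eq_int_iff m).mp hm.symm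
      have hnm : n ≤ m := by rw [← hm] at hle; exact_mod_cast hle
      refine ⟨fun z => (z - x) ^ (m - n).toNat * G z,
        ((analyticAt_id.sub analyticAt_const).pow _).mul hG, ?_⟩
      filter_upwards [hfG, eventually_mem_nhdsWithin] with z h1 h3
      have hzx : z - x ≠ 0 := sub_ne_zero.mpr (Set.mem_compl_singleton_iff.mp h3)
      rw [h1, smul_eq_mul, ← mul_assoc, ← zpow_natCast (z - x) (m - n).toNat,
        Int.toNat_of_nonneg (by omega), ← zpow_add₀ hzx]
      ring_nf
  · rintro ⟨h, hh, hfh⟩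
    have hzp : MeromorphicAt (fun z : ℂ => (z - x) ^ n) x :=
      ((analyticAt_id.sub analyticAt_const).meromorphicAt).zpow n
    have hM : MeromorphicAt ((fun z : ℂ => (z - x) ^ n) * h) x := hzp.mul hh.meromorphicAt
    have h1 : hf.order = hM.order := by
      refine order_congr hf hM ?_
      filter_upwards [hfh] with z hz
      simpa [Pi.mul_apply] using hz
    have h2 : hM.order = hzp.order + hh.meromorphicAt.order := order_mul hzp hh.meromorphicAt
    rw [h1, h2, order_sub_zpow x n hzp]
    calc (n : WithTop ℤ) = (n : WithTop ℤ) + 0 := by rw [add_zero]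
    _ ≤ (n : WithTop ℤ) + hh.meromorphicAt.order :=
        add_le_add_right (analytic_order_nonneg hh) _

lemma le_order_add (hf : MeromorphicAt f x) (hg : MeromorphicAt g x) (n : ℤ)
    (h1 : (n : WithTop ℤ) ≤ hf.order) (h2 : (n : WithTop ℤ) ≤ hg.order) :
    (n : WithTop ℤ) ≤ (hf.add hg).order := by
  rw [le_order_iff] at h1 h2 ⊢
  obtain ⟨h₁, hh₁, e₁⟩ := h1; obtain ⟨h₂, hh₂, e₂⟩ := h2
  refine ⟨h₁ + h₂, hh₁.add hh₂, ?_⟩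
  filter_upwards [e₁, e₂] with z hz1 hz2
  simp only [Pi.add_apply, hz1, hz2]; ring

lemma order_add_of_lt (hf : MeromorphicAt f x) (hg : MeromorphicAt g x)
    {n : ℤ} (hfn : hf.order = (n : WithTop ℤ)) (hgn : ((n + 1 : ℤ) : WithTop ℤ) ≤ hg.order) :
    (hf.add hg).order = (n : WithTop ℤ) := by
  obtain ⟨F, hF, hFx, hfF⟩ := (hf.order_eq_int_iff n).mp hfn
  obtain ⟨H, hH, hgH⟩ := (le_order_iff hg (n + 1)).mp hgn
  rw [(hf.add hg).order_eq_int_iff]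
  refine ⟨fun z => F z + (z - x) * H z,
    hF.add ((analyticAt_id.sub analyticAt_const).mul hH), by simpa using hFx, ?_⟩
  filter_upwards [hfF, hgH, eventually_mem_nhdsWithin] with z h1 h2 h3
  have hzx : z - x ≠ 0 := sub_ne_zero.mpr (Set.mem_compl_singleton_iff.mp h3)
  simp only [Pi.add_apply, h1, h2, smul_eq_mul]
  rw [zpow_add₀ hzx, zpow_one]
  ring

lemma tendsto_comp_add (p c : ℂ) :
    Filter.Tendsto (fun z : ℂ => z + c) (𝓝[≠] p) (𝓝[≠] (p + c)) := by
  rw [tendsto_nhdsWithin_iff]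
  constructor
  · exact ((continuous_id.add continuous_const).tendsto p).mono_left nhdsWithin_le_nhds
  · filter_upwards [eventually_mem_nhdsWithin] with z hz
    exact Set.mem_compl_singleton_iff.mpr
      (fun h => (Set.mem_compl_singleton_iff.mp hz) (add_left_injective c h))

lemma meromorphicAt_comp_add {f : ℂ → ℂ} (p c : ℂ) (hf : MeromorphicAt f (p + c)) :
    MeromorphicAt (fun z => f (z + c)) p := by
  rw [MeromorphicAt.iff_eventuallyEq_zpow_smul_analyticAt] at hf ⊢
  obtain ⟨n, g, hg, hfg⟩ := hf
  have haff : AnalyticAt ℂ (fun z : ℂ => z + c) p := analyticAt_id.add analyticAt_const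
  have hgc : AnalyticAt ℂ (fun z => g (z + c)) p := AnalyticAt.comp (f := fun z : ℂ => z + c) hg haff
  refine ⟨n, fun z => g (z + c), hgc, ?_⟩
  filter_upwards [(tendsto_comp_add p c).eventually hfg] with z hz
  have e : z + c - (p + c) = z - p := by ring
  rw [e] at hz
  exact hz

lemma order_comp_add {f : ℂ → ℂ} (p c : ℂ) (hf : MeromorphicAt f (p + c))
    (hc : MeromorphicAt (fun z => f (z + c)) p) : hc.order = hf.order := by
  rcases eq_or_ne hf.order ⊤ with ht | hne
  · rw [ht, hc.order_eq_top_iff]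
    filter_upwards [(tendsto_comp_add p c).eventually (hf.order_eq_top_iff.mp ht)] with z hz
    exact hz
  · obtain ⟨n, hn⟩ := WithTop.ne_top_iff_exists.mp hne
    rw [← hn, hc.order_eq_int_iff]
    obtain ⟨G, hG, hGx, hfG⟩ := (hf.order_eq_int_iff n).mp hn.symm
    have haff : AnalyticAt ℂ (fun z : ℂ => z + c) p := analyticAt_id.add analyticAt_const
    have hGc : AnalyticAt ℂ (fun z => G (z + c)) p :=
      AnalyticAt.comp (f := fun z : ℂ => z + c) hG haff
    refine ⟨fun z => G (z + c), hGc, hGx, ?_⟩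
    filter_upwards [(tendsto_comp_add p c).eventually hfG] with z hz
    have e : z + c - (p + c) = z - p := by ring
    rw [e] at hz
    exact hz

lemma eventuallyEq_of_countable (hf : MeromorphicAt f x) (hg : MeromorphicAt g x)
    {S : Set ℂ} (hS : S.Countable) (h : ∀ᶠ z in 𝓝[≠] x, z ∉ S → f z = g z) :
    f =ᶠ[𝓝[≠] x] g := by
  have hd := hf.sub hg
  rcases eq_or_ne hd.order ⊤ with ht | hne
  · filter_upwards [hd.order_eq_top_iff.mp ht] with z hz
    have h2 : f z - g z = 0 := hz
    exact sub_eq_zero.mp h2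
  · obtain ⟨n, hn⟩ := WithTop.ne_top_iff_exists.mp hne
    exfalso
    have hev : ∀ᶠ z in 𝓝[≠] x, z ∈ S := by
      filter_upwards [eventually_ne hd hn.symm, h] with z h1 h2
      by_contra hzS
      exact h1 (by simpa [Pi.sub_apply, sub_eq_zero] using h2 hzS)
    exact nhdsNE_not_countable (Filter.eventually_mem_set.mp hev) hS

end ZPZ

open Filter Topology ZPZ

/-- If a meromorphic `y` solves `y(z+1) + y(z-1) = (a y² + b y + c)/y²` with rational
coefficients, `a`, `b`, `c` are analytic at `ẑ + 1`, `y` has a zero of order `k ≥ 1` at `ẑ`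
and a pole of order exactly `2k` at `ẑ + 1`, then `z ↦ y(z+2) - a(z+1)` has a zero of order
exactly `k` at `ẑ`; in particular `y` is analytic at `ẑ + 2` with value `a(ẑ+1)`. -/

theorem zero_pole_zero_pattern
    (y : ℂ → ℂ) (hy : MeromorphicOn y Set.univ)
    (a b c : RatFunc ℂ)
    (heq : EqOffCountable (fun z => y (z + 1) + y (z - 1))
      (fun z => (a.eval (RingHom.id ℂ) z * y z ^ 2 + b.eval (RingHom.id ℂ) z * y z +
        c.eval (RingHom.id ℂ) z) / y z ^ 2))
    (zhat : ℂ)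
    (haz : a.denom.eval (zhat + 1) ≠ 0) (hbz : b.denom.eval (zhat + 1) ≠ 0)
    (hcz : c.denom.eval (zhat + 1) ≠ 0)
    (k : ℕ) (hk : 1 ≤ k) (hordz : meroOrder y zhat = ((k : ℤ) : WithTop ℤ))
    (hordp : meroOrder y (zhat + 1) = ((-(2 * (k : ℤ)) : ℤ) : WithTop ℤ)) :
    meroOrder (fun z => y (z + 2) - a.eval (RingHom.id ℂ) (z + 1)) zhat
        = ((k : ℤ) : WithTop ℤ) ∧
      ((1 : ℤ) : WithTop ℤ) ≤
        meroOrder (fun z => y z - a.eval (RingHom.id ℂ) (zhat + 1)) (zhat + 2) := by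
  obtain ⟨S, hScount, hSeq⟩ := heq
  have hy' : ∀ w : ℂ, MeromorphicAt y w := fun w => hy w (Set.mem_univ w)
  have oy : (hy' zhat).order = ((k : ℤ) : WithTop ℤ) := by
    simp only [meroOrder] at hordz
    rwa [dif_pos (hy' zhat)] at hordz
  have oyp : (hy' (zhat + 1)).order = ((-(2 * (k : ℤ)) : ℤ) : WithTop ℤ) := by
    simp only [meroOrder] at hordp
    rwa [dif_pos (hy' (zhat + 1))] at hordp
  -- coefficient functions are analytic at zhat
  have evalPoly : ∀ (p : Polynomial ℂ) (w : ℂ), AnalyticAt ℂ (fun z => p.eval (z + 1)) w := by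
    intro p w
    have h1 : AnalyticAt ℂ (fun t => p.eval t) (w + 1) :=
      (AnalyticOnNhd.eval_polynomial p) (w + 1) (Set.mem_univ _)
    have haff : AnalyticAt ℂ (fun z : ℂ => z + 1) w := analyticAt_id.add analyticAt_const
    exact AnalyticAt.comp (f := fun z : ℂ => z + 1) h1 haff
  have ratAn : ∀ (r : RatFunc ℂ), r.denom.eval (zhat + 1) ≠ 0 →
      AnalyticAt ℂ (fun z => r.eval (RingHom.id ℂ) (z + 1)) zhat := by
    intro r hr
    have h1 : ∀ z : ℂ, r.eval (RingHom.id ℂ) z = r.num.eval z / r.denom.eval z := fun z => rfl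
    simp only [h1]
    exact (evalPoly r.num zhat).div (evalPoly r.denom zhat) hr
  have hAan := ratAn a haz
  have hBan := ratAn b hbz
  have hCan := ratAn c hcz
  -- meromorphic components
  have hY1 : MeromorphicAt (fun z => y (z + 1)) zhat :=
    meromorphicAt_comp_add zhat 1 (hy' (zhat + 1))
  have hY2 : MeromorphicAt (fun z => y (z + 2)) zhat :=
    meromorphicAt_comp_add zhat 2 (hy' (zhat + 2))
  have oY1 : hY1.order = ((-(2 * (k : ℤ)) : ℤ) : WithTop ℤ) :=
    (order_comp_add zhat 1 (hy' (zhat + 1)) hY1).trans oyp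
  have hF : MeromorphicAt (fun z => y (z + 2) - a.eval (RingHom.id ℂ) (z + 1)) zhat :=
    hY2.sub hAan.meromorphicAt
  have hYY := hY1.mul hY1
  have hP := hF.mul hYY
  have hM := (hy' zhat).mul hYY
  have hN := hM.neg
  have hBY := hBan.meromorphicAt.mul hY1
  have hR := hBY.add hCan.meromorphicAt
  have hQ := hN.add hR
  have oYY : hYY.order = ((-(2 * (k : ℤ)) + -(2 * (k : ℤ)) : ℤ) : WithTop ℤ) := by
    rw [order_mul hY1 hY1, oY1, ← WithTop.coe_add]
  have oM : hM.order = ((-(3 * (k : ℤ)) : ℤ) : WithTop ℤ) := by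
    rw [order_mul (hy' zhat) hYY, oy, oYY, ← WithTop.coe_add]
    rw [WithTop.coe_inj]
    ring
  have oN : hN.order = ((-(3 * (k : ℤ)) : ℤ) : WithTop ℤ) := (order_neg hM).trans oM
  have oR : ((-(2 * (k : ℤ)) : ℤ) : WithTop ℤ) ≤ hR.order := by
    apply le_order_add hBY hCan.meromorphicAt
    · rw [order_mul hBan.meromorphicAt hY1, oY1]
      calc ((-(2 * (k : ℤ)) : ℤ) : WithTop ℤ)
          = 0 + ((-(2 * (k : ℤ)) : ℤ) : WithTop ℤ) := by rw [zero_add]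
        _ ≤ _ := add_le_add_left (analytic_order_nonneg hBan) _
    · exact le_trans (by exact_mod_cast (by omega : (-(2 * (k : ℤ)) : ℤ) ≤ 0))
        (analytic_order_nonneg hCan)
  have oQ : hQ.order = ((-(3 * (k : ℤ)) : ℤ) : WithTop ℤ) := by
    apply order_add_of_lt hN hR oN
    refine le_trans ?_ oR
    exact_mod_cast (by omega : (-(3 * (k : ℤ)) + 1 : ℤ) ≤ -(2 * (k : ℤ)))
  have hS' : ((fun z : ℂ => z + 1) ⁻¹' S).Countable :=
    hScount.preimage (add_left_injective 1)
  have oPQ : hP.order = hQ.order := by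
    apply order_congr hP hQ
    apply eventuallyEq_of_countable hP hQ hS'
    filter_upwards [eventually_ne hY1 oY1] with z hYz hzS
    have h0 : y (z + 1 + 1) + y (z + 1 - 1) =
        (a.eval (RingHom.id ℂ) (z + 1) * y (z + 1) ^ 2 +
          b.eval (RingHom.id ℂ) (z + 1) * y (z + 1) +
          c.eval (RingHom.id ℂ) (z + 1)) / y (z + 1) ^ 2 := hSeq (z + 1) hzS
    have e1 : z + 1 + 1 = z + 2 := by ring
    rw [e1, add_sub_cancel_right] at h0
    have hY : y (z + 1) ≠ 0 := hYz
    show (y (z + 2) - a.eval (RingHom.id ℂ) (z + 1)) * (y (z + 1) * y (z + 1)) =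
        -(y z * (y (z + 1) * y (z + 1))) +
          (b.eval (RingHom.id ℂ) (z + 1) * y (z + 1) + c.eval (RingHom.id ℂ) (z + 1))
    field_simp at h0
    linear_combination h0
  have keyF : hF.order = ((k : ℤ) : WithTop ℤ) := by
    have h1 : hF.order + ((-(2 * (k : ℤ)) + -(2 * (k : ℤ)) : ℤ) : WithTop ℤ)
        = ((-(3 * (k : ℤ)) : ℤ) : WithTop ℤ) := by
      rw [← oYY, ← order_mul hF hYY]
      exact oPQ.trans oQ
    rcases eq_or_ne hF.order ⊤ with ht | hne
    · rw [ht, top_add] at h1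
      exact absurd h1 WithTop.top_ne_coe
    · obtain ⟨n, hn⟩ := WithTop.ne_top_iff_exists.mp hne
      rw [← hn, ← WithTop.coe_add] at h1
      have h2 : n + (-(2 * (k : ℤ)) + -(2 * (k : ℤ))) = -(3 * (k : ℤ)) := by exact_mod_cast h1
      have h3 : n = (k : ℤ) := by omega
      rw [← hn, h3]
  constructor
  · simp only [meroOrder]
    rw [dif_pos hF]
    exact keyF
  · have hH : MeromorphicAt (fun z => y z - a.eval (RingHom.id ℂ) (zhat + 1)) (zhat + 2) :=
      (hy' (zhat + 2)).sub analyticAt_const.meromorphicAt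
    have hH2 : MeromorphicAt (fun z => y (z + 2) - a.eval (RingHom.id ℂ) (zhat + 1)) zhat :=
      meromorphicAt_comp_add zhat 2 hH
    have oH2 : hH2.order = hH.order := order_comp_add zhat 2 hH hH2
    have hG2 : AnalyticAt ℂ
        (fun z => a.eval (RingHom.id ℂ) (z + 1) - a.eval (RingHom.id ℂ) (zhat + 1)) zhat :=
      hAan.sub analyticAt_const
    have hsum := hF.add hG2.meromorphicAt
    have osum : ((1 : ℤ) : WithTop ℤ) ≤ hsum.order := by
      apply le_order_add hF hG2.meromorphicAt
      · rw [keyF]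
        exact_mod_cast (by omega : (1 : ℤ) ≤ (k : ℤ))
      · exact_mod_cast analytic_order_pos hG2 (by simp)
    have oeq : hH2.order = hsum.order := by
      apply order_congr hH2 hsum
      filter_upwards with z
      show y (z + 2) - a.eval (RingHom.id ℂ) (zhat + 1) =
          (y (z + 2) - a.eval (RingHom.id ℂ) (z + 1)) +
            (a.eval (RingHom.id ℂ) (z + 1) - a.eval (RingHom.id ℂ) (zhat + 1))
      ring
    simp only [meroOrder]
    rw [dif_pos hH]; change _ ≤ hH.order; rw [← oH2, oeq]
    exact osum
end

section
/- Let b_j, b_{j+1}, b_{j+2}, c_j, c_{j+1}, c_{j+2} ∈ ℂ with c_j ≠ 0, and let y_{j−1}, y_j, y_{j+1}, y_{j+2}, y_{j+3} ∈ ℂ(z) be rational functions, none identically zero, satisfying y_{n+1} + y_{n−1} = (b_n y_n + c_n)/y_n² in ℂ(z) for n = j, j+1, j+2. Suppose y_j has a zero of order k ≥ 1 at a point z₀ ∈ ℂ and y_{j−1} has at z₀ either no pole or a pole of order strictly less than k. Then y_{j+1} has a pole of order exactly 2k at z₀, y_{j+2} has a zero of order exactly k at z₀, and if moreover c_{j+2}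 ≠ c_j, then y_{j+3} has a pole of order exactly 2k at z₀. -/
/-- The order of a nonzero rational function `f ∈ ℂ(z)` at a point `z₀`: the integer `m`
such that `f(z) = (z - z₀)^m g(z)` with `g` finite and nonzero at `z₀`.  A zero of order
`k` corresponds to `m = k > 0` and a pole of order `k` to `m = -k < 0`.  (For `f = 0` this
gives the junk value `0`.) -/
noncomputable def ratFuncOrder (f : RatFunc ℂ) (z₀ : ℂ) : ℤ :=
  (f.num.rootMultiplicity z₀ : ℤ) - (f.denom.rootMultiplicity z₀ : ℤ)

open Polynomial

namespace SingAux

noncomputable def U (z₀ : ℂ) : RatFunc ℂ :=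
  algebraMap (Polynomial ℂ) (RatFunc ℂ) (X - C z₀)

lemma U_ne_zero (z₀ : ℂ) : U z₀ ≠ 0 :=
  RatFunc.algebraMap_ne_zero (X_sub_C_ne_zero z₀)

/-- `f = a · (z-z₀)^m (1 + o(1))` near `z₀`. -/
def HasLead (z₀ : ℂ) (f : RatFunc ℂ) (m : ℤ) (a : ℂ) : Prop :=
  a ≠ 0 ∧ ∃ p q : Polynomial ℂ, q.eval z₀ ≠ 0 ∧ p.eval z₀ = a * q.eval z₀ ∧
    f = U z₀ ^ m * (algebraMap (Polynomial ℂ) (RatFunc ℂ) p /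
      algebraMap (Polynomial ℂ) (RatFunc ℂ) q)

lemma ratFuncOrder_div (z₀ : ℂ) {p q : Polynomial ℂ} (hp : p ≠ 0) (hq : q ≠ 0) :
    ratFuncOrder (algebraMap (Polynomial ℂ) (RatFunc ℂ) p /
      algebraMap (Polynomial ℂ) (RatFunc ℂ) q) z₀ =
    (p.rootMultiplicity z₀ : ℤ) - (q.rootMultiplicity z₀ : ℤ) := by
  set f := algebraMap (Polynomial ℂ) (RatFunc ℂ) p / algebraMap (Polynomial ℂ) (RatFunc ℂ) q
    with hf
  have hp' : algebraMap (Polynomial ℂ) (RatFunc ℂ) p ≠ 0 := RatFunc.algebraMap_ne_zero hp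
  have hq' : algebraMap (Polynomial ℂ) (RatFunc ℂ) q ≠ 0 := RatFunc.algebraMap_ne_zero hq
  have hfne : f ≠ 0 := div_ne_zero hp' hq'
  have hnum : f.num ≠ 0 := RatFunc.num_ne_zero hfne
  have hden : f.denom ≠ 0 := RatFunc.denom_ne_zero f
  have hden' : algebraMap (Polynomial ℂ) (RatFunc ℂ) f.denom ≠ 0 :=
    RatFunc.algebraMap_ne_zero hden
  have key : f.num * q = p * f.denom := by
    apply RatFunc.algebraMap_injective ℂ
    rw [map_mul, map_mul]
    have h1 : algebraMap (Polynomial ℂ) (RatFunc ℂ) f.num /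
        algebraMap (Polynomial ℂ) (RatFunc ℂ) f.denom =
        algebraMap (Polynomial ℂ) (RatFunc ℂ) p / algebraMap (Polynomial ℂ) (RatFunc ℂ) q := by
      rw [RatFunc.num_div_denom]
    rw [div_eq_div_iff hden' hq'] at h1
    exact h1
  have := congrArg (fun r => (Polynomial.rootMultiplicity z₀ r : ℤ)) key
  simp only [Polynomial.rootMultiplicity_mul (mul_ne_zero hnum hq),
    Polynomial.rootMultiplicity_mul (mul_ne_zero hp hden)] at this
  push_cast at this
  unfold ratFuncOrder
  omega

lemma HasLead.ne_zero {z₀ : ℂ} {f : RatFunc ℂ} {m : ℤ} {a : ℂ}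
    (h : HasLead z₀ f m a) : f ≠ 0 := by
  obtain ⟨ha, p, q, hq, hpa, rfl⟩ := h
  have hp0 : p.eval z₀ ≠ 0 := by rw [hpa]; exact mul_ne_zero ha hq
  have hp : p ≠ 0 := fun h => hp0 (by simp [h])
  have hq0 : q ≠ 0 := fun h => hq (by simp [h])
  exact mul_ne_zero (zpow_ne_zero _ (U_ne_zero z₀))
    (div_ne_zero (RatFunc.algebraMap_ne_zero hp) (RatFunc.algebraMap_ne_zero hq0))

lemma HasLead.order {z₀ : ℂ} {f : RatFunc ℂ} {m : ℤ} {a : ℂ}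
    (h : HasLead z₀ f m a) : ratFuncOrder f z₀ = m := by
  obtain ⟨ha, p, q, hq, hpa, rfl⟩ := h
  have hp0 : p.eval z₀ ≠ 0 := by rw [hpa]; exact mul_ne_zero ha hq
  have hp : p ≠ 0 := fun h => hp0 (by simp [h])
  have hq0 : q ≠ 0 := fun h => hq (by simp [h])
  have hU : U z₀ ^ m = algebraMap (Polynomial ℂ) (RatFunc ℂ) ((X - C z₀) ^ m.toNat) /
      algebraMap (Polynomial ℂ) (RatFunc ℂ) ((X - C z₀) ^ (-m).toNat) := by
    rw [map_pow, map_pow]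
    rcases le_or_gt 0 m with hm | hm
    · have : (-m).toNat = 0 := by omega
      rw [this, pow_zero, div_one, ← zpow_natCast]
      congr 1; omega
    · have : m.toNat = 0 := by omega
      rw [this, pow_zero, ← zpow_natCast, one_div, ← zpow_neg]
      congr 1; omega
  rw [hU, div_mul_div_comm, ← map_mul, ← map_mul,
    ratFuncOrder_div z₀ (mul_ne_zero (pow_ne_zero _ (X_sub_C_ne_zero z₀)) hp)
      (mul_ne_zero (pow_ne_zero _ (X_sub_C_ne_zero z₀)) hq0),
    Polynomial.rootMultiplicity_mul (mul_ne_zero (pow_ne_zero _ (X_sub_C_ne_zero z₀)) hp),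
    Polynomial.rootMultiplicity_mul (mul_ne_zero (pow_ne_zero _ (X_sub_C_ne_zero z₀)) hq0)]
  simp only [Polynomial.rootMultiplicity_X_sub_C_pow]
  rw [Polynomial.rootMultiplicity_eq_zero (fun hr => hp0 hr),
    Polynomial.rootMultiplicity_eq_zero (fun hr => hq hr)]
  push_cast
  omega

lemma exists_hasLead {z₀ : ℂ} {f : RatFunc ℂ} (hf : f ≠ 0) :
    ∃ a, HasLead z₀ f (ratFuncOrder f z₀) a := by
  set s := f.num.rootMultiplicity z₀ with hs
  set t := f.denom.rootMultiplicity z₀ with ht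
  set p := f.num /ₘ (X - C z₀) ^ s with hpdef
  set q := f.denom /ₘ (X - C z₀) ^ t with hqdef
  have hp0 : p.eval z₀ ≠ 0 :=
    Polynomial.eval_divByMonic_pow_rootMultiplicity_ne_zero z₀ (RatFunc.num_ne_zero hf)
  have hq0 : q.eval z₀ ≠ 0 :=
    Polynomial.eval_divByMonic_pow_rootMultiplicity_ne_zero z₀ (RatFunc.denom_ne_zero f)
  refine ⟨p.eval z₀ / q.eval z₀, div_ne_zero hp0 hq0, p, q, hq0, by field_simp, ?_⟩
  have hnum : (X - C z₀) ^ s * p = f.num :=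
    Polynomial.pow_mul_divByMonic_rootMultiplicity_eq f.num z₀
  have hden : (X - C z₀) ^ t * q = f.denom :=
    Polynomial.pow_mul_divByMonic_rootMultiplicity_eq f.denom z₀
  have horder : ratFuncOrder f z₀ = (s : ℤ) - t := rfl
  rw [horder]
  have hq0' : q ≠ 0 := fun h => hq0 (by simp [h])
  have : f = algebraMap (Polynomial ℂ) (RatFunc ℂ) f.num /
      algebraMap (Polynomial ℂ) (RatFunc ℂ) f.denom := (RatFunc.num_div_denom f).symm
  rw [this, ← hnum, ← hden, map_mul, map_mul, map_pow, map_pow]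
  rw [zpow_sub₀ (U_ne_zero z₀), zpow_natCast, zpow_natCast]
  unfold U
  have hXz : (algebraMap (Polynomial ℂ) (RatFunc ℂ)) (X - C z₀) ≠ 0 :=
    RatFunc.algebraMap_ne_zero (X_sub_C_ne_zero z₀)
  have hqz : (algebraMap (Polynomial ℂ) (RatFunc ℂ)) q ≠ 0 := RatFunc.algebraMap_ne_zero hq0'
  field_simp

lemma HasLead.congr {z₀ : ℂ} {f : RatFunc ℂ} {m n : ℤ} {a : ℂ}
    (h : HasLead z₀ f m a) (hmn : m = n) : HasLead z₀ f n a := hmn ▸ h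

lemma HasLead.congr' {z₀ : ℂ} {f : RatFunc ℂ} {m n : ℤ} {a b : ℂ}
    (h : HasLead z₀ f m a) (hmn : m = n) (hab : a = b) : HasLead z₀ f n b :=
  hmn ▸ hab ▸ h

lemma HasLead.mul {z₀ : ℂ} {f g : RatFunc ℂ} {m n : ℤ} {a b : ℂ}
    (hf : HasLead z₀ f m a) (hg : HasLead z₀ g n b) :
    HasLead z₀ (f * g) (m + n) (a * b) := by
  obtain ⟨ha, p, q, hq, hpa, rfl⟩ := hf
  obtain ⟨hb, r, s, hsz, hrb, rfl⟩ := hg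
  refine ⟨mul_ne_zero ha hb, p * r, q * s, by simp [hq, hsz], ?_, ?_⟩
  · simp only [eval_mul, hpa, hrb]; ring
  · have hq' : algebraMap (Polynomial ℂ) (RatFunc ℂ) q ≠ 0 :=
      RatFunc.algebraMap_ne_zero (fun h => hq (by simp [h]))
    have hs' : algebraMap (Polynomial ℂ) (RatFunc ℂ) s ≠ 0 :=
      RatFunc.algebraMap_ne_zero (fun h => hsz (by simp [h]))
    rw [zpow_add₀ (U_ne_zero z₀), map_mul, map_mul]
    field_simp

lemma HasLead.inv {z₀ : ℂ} {f : RatFunc ℂ} {m : ℤ} {a : ℂ}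
    (hf : HasLead z₀ f m a) : HasLead z₀ f⁻¹ (-m) a⁻¹ := by
  obtain ⟨ha, p, q, hq, hpa, rfl⟩ := hf
  have hp0 : p.eval z₀ ≠ 0 := by rw [hpa]; exact mul_ne_zero ha hq
  refine ⟨inv_ne_zero ha, q, p, hp0, ?_, ?_⟩
  · rw [hpa]; field_simp
  · rw [mul_inv, zpow_neg, inv_div]

lemma HasLead.neg {z₀ : ℂ} {f : RatFunc ℂ} {m : ℤ} {a : ℂ}
    (hf : HasLead z₀ f m a) : HasLead z₀ (-f) m (-a) := by
  obtain ⟨ha, p, q, hq, hpa, rfl⟩ := hf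
  refine ⟨neg_ne_zero.2 ha, -p, q, hq, by simp [hpa], by rw [map_neg]; ring⟩

lemma hasLead_C {z₀ : ℂ} {c : ℂ} (hc : c ≠ 0) : HasLead z₀ (RatFunc.C c) 0 c :=
  ⟨hc, C c, 1, by simp, by simp, by simp [RatFunc.algebraMap_C]⟩

lemma HasLead.add_lt {z₀ : ℂ} {f g : RatFunc ℂ} {m n : ℤ} {a b : ℂ}
    (hf : HasLead z₀ f m a) (hg : HasLead z₀ g n b) (hmn : m < n) :
    HasLead z₀ (f + g) m a := by
  obtain ⟨ha, p, q, hq, hpa, rfl⟩ := hf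
  obtain ⟨hb, r, s, hsz, hrb, rfl⟩ := hg
  refine ⟨ha, p * s + (X - C z₀) ^ (n - m).toNat * r * q, q * s,
    by simp [hq, hsz], ?_, ?_⟩
  · have h1 : ((X - C z₀) ^ (n - m).toNat).eval z₀ = 0 := by
      rw [eval_pow]; simp; omega
    simp only [eval_add, eval_mul, hpa, h1]; ring
  · have hUn : U z₀ ^ n = U z₀ ^ m *
        algebraMap (Polynomial ℂ) (RatFunc ℂ) ((X - C z₀) ^ (n - m).toNat) := by
      have hUd : algebraMap (Polynomial ℂ) (RatFunc ℂ) (X - C z₀) = U z₀ := rfl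
      rw [map_pow, hUd, ← zpow_natCast (U z₀), ← zpow_add₀ (U_ne_zero z₀)]
      congr 1; omega
    rw [hUn]
    have hq' : algebraMap (Polynomial ℂ) (RatFunc ℂ) q ≠ 0 :=
      RatFunc.algebraMap_ne_zero (fun h => hq (by simp [h]))
    have hs' : algebraMap (Polynomial ℂ) (RatFunc ℂ) s ≠ 0 :=
      RatFunc.algebraMap_ne_zero (fun h => hsz (by simp [h]))
    simp only [map_add, map_mul]
    field_simp

lemma HasLead.add_eq {z₀ : ℂ} {f g : RatFunc ℂ} {m : ℤ} {a b : ℂ}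
    (hf : HasLead z₀ f m a) (hg : HasLead z₀ g m b) (hab : a + b ≠ 0) :
    HasLead z₀ (f + g) m (a + b) := by
  obtain ⟨ha, p, q, hq, hpa, rfl⟩ := hf
  obtain ⟨hb, r, s, hsz, hrb, rfl⟩ := hg
  refine ⟨hab, p * s + r * q, q * s, by simp [hq, hsz], ?_, ?_⟩
  · simp only [eval_add, eval_mul, hpa, hrb]; ring
  · have hq' : algebraMap (Polynomial ℂ) (RatFunc ℂ) q ≠ 0 :=
      RatFunc.algebraMap_ne_zero (fun h => hq (by simp [h]))
    have hs' : algebraMap (Polynomial ℂ) (RatFunc ℂ) s ≠ 0 :=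
      RatFunc.algebraMap_ne_zero (fun h => hsz (by simp [h]))
    simp only [map_add, map_mul]
    field_simp

end SingAux

open SingAux

/-- Singularity confinement for rational iterates of `y_{n+1} + y_{n-1} = (b_n y_n + c_n)/y_n²`:
if `y_j` has a zero of order `k ≥ 1` at `z₀` and `y_{j-1}` has at `z₀` either no pole or a
pole of order strictly less than `k`, then `y_{j+1}` has a pole of order exactly `2k` at `z₀`,
`y_{j+2}` has a zero of order exactly `k` at `z₀`, and if `c_{j+2} ≠ c_j` then `y_{j+3}`
has a pole of order exactly `2k` at `z₀`. -/


theorem rational_iterates_singularity_pattern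
    (bj bj1 bj2 cj cj1 cj2 : ℂ) (hcj : cj ≠ 0)
    (yjm1 yj yjp1 yjp2 yjp3 : RatFunc ℂ)
    (h0 : yjm1 ≠ 0) (h1 : yj ≠ 0) (h2 : yjp1 ≠ 0) (h3 : yjp2 ≠ 0) (h4 : yjp3 ≠ 0)
    (heq1 : yjp1 + yjm1 = (RatFunc.C bj * yj + RatFunc.C cj) / yj ^ 2)
    (heq2 : yjp2 + yj = (RatFunc.C bj1 * yjp1 + RatFunc.C cj1) / yjp1 ^ 2)
    (heq3 : yjp3 + yjp1 = (RatFunc.C bj2 * yjp2 + RatFunc.C cj2) / yjp2 ^ 2)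
    (k : ℕ) (hk : 1 ≤ k) (z₀ : ℂ)
    (hordj : ratFuncOrder yj z₀ = (k : ℤ))
    (hordjm1 : -(k : ℤ) < ratFuncOrder yjm1 z₀) :
    ratFuncOrder yjp1 z₀ = -(2 * (k : ℤ)) ∧
      ratFuncOrder yjp2 z₀ = (k : ℤ) ∧
      (cj2 ≠ cj → ratFuncOrder yjp3 z₀ = -(2 * (k : ℤ))) := by
  set K : ℤ := (k : ℤ) with hKdef
  have hK1 : 1 ≤ K := by rw [hKdef]; exact_mod_cast hk
  obtain ⟨a, ha⟩ := exists_hasLead (z₀ := z₀) h1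
  rw [hordj] at ha
  have ha0 : a ≠ 0 := ha.1
  obtain ⟨b, hb⟩ := exists_hasLead (z₀ := z₀) h0
  set m' := ratFuncOrder yjm1 z₀ with hm'
  -- Step 1 : order of y_{j+1}
  have hN1 : HasLead z₀ (RatFunc.C bj * yj + RatFunc.C cj) 0 cj := by
    by_cases hbj : bj = 0
    · simpa [hbj] using hasLead_C (z₀ := z₀) hcj
    · have h := (hasLead_C (z₀ := z₀) hcj).add_lt
        (((hasLead_C (z₀ := z₀) hbj).mul ha).congr (show (0:ℤ) + K = K by ring))
        (by omega)
      rwa [add_comm (RatFunc.C cj) (RatFunc.C bj * yj)] at h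
  have hinv0 : HasLead z₀ ((yj ^ 2)⁻¹) (-(2*K)) ((a*a)⁻¹) := by
    rw [pow_two]; exact ((ha.mul ha).inv).congr (by ring)
  have hfrac1 : HasLead z₀ ((RatFunc.C bj * yj + RatFunc.C cj) / yj ^ 2)
      (-(2*K)) (cj * (a*a)⁻¹) := by
    rw [div_eq_mul_inv]
    exact (hN1.mul hinv0).congr (by ring)
  have e1 : yjp1 = (RatFunc.C bj * yj + RatFunc.C cj) / yj ^ 2 + -yjm1 := by
    linear_combination heq1
  have hyp1 : HasLead z₀ yjp1 (-(2*K)) (cj * (a*a)⁻¹) := by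
    rw [e1]
    exact hfrac1.add_lt hb.neg (by omega)
  have hA1 : cj * (a*a)⁻¹ ≠ 0 := mul_ne_zero hcj (inv_ne_zero (mul_ne_zero ha0 ha0))
  -- Step 2 : order of y_{j+2}
  have hinv1 : HasLead z₀ ((yjp1 ^ 2)⁻¹) (4*K) ((cj * (a*a)⁻¹ * (cj * (a*a)⁻¹))⁻¹) := by
    rw [pow_two]; exact ((hyp1.mul hyp1).inv).congr (by ring)
  have e2 : yjp2 = -yj + (RatFunc.C bj1 * yjp1 + RatFunc.C cj1) / yjp1 ^ 2 := by
    linear_combination heq2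
  have hyp2 : HasLead z₀ yjp2 K (-a) := by
    by_cases hN2 : RatFunc.C bj1 * yjp1 + RatFunc.C cj1 = 0
    · rw [e2, hN2, zero_div, add_zero]; exact ha.neg
    · obtain ⟨r, c, hrge, hlead⟩ :
          ∃ r c, -(2*K) ≤ r ∧ HasLead z₀ (RatFunc.C bj1 * yjp1 + RatFunc.C cj1) r c := by
        by_cases hb1 : bj1 = 0
        · have hc1 : cj1 ≠ 0 := by
            intro h; exact hN2 (by simp [hb1, h])
          exact ⟨0, cj1, by omega, by simpa [hb1] using hasLead_C (z₀ := z₀) hc1⟩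
        · by_cases hc1 : cj1 = 0
          · exact ⟨-(2*K), bj1 * (cj * (a*a)⁻¹), le_refl _, by
              simpa [hc1] using ((hasLead_C (z₀ := z₀) hb1).mul hyp1).congr
                (show (0:ℤ) + -(2*K) = -(2*K) by ring)⟩
          · exact ⟨-(2*K), bj1 * (cj * (a*a)⁻¹), le_refl _,
              (((hasLead_C (z₀ := z₀) hb1).mul hyp1).congr
                (show (0:ℤ) + -(2*K) = -(2*K) by ring)).add_lt
                (hasLead_C (z₀ := z₀) hc1) (by omega)⟩
      have hfrac2 : HasLead z₀ ((RatFunc.C bj1 * yjp1 + RatFunc.C cj1) / yjp1 ^ 2)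
          (r + 4*K) (c * (cj * (a*a)⁻¹ * (cj * (a*a)⁻¹))⁻¹) := by
        rw [div_eq_mul_inv]; exact hlead.mul hinv1
      rw [e2]
      exact (ha.neg).add_lt hfrac2 (by omega)
  refine ⟨hyp1.order, hyp2.order, ?_⟩
  -- Step 3 : order of y_{j+3}
  intro hne
  have hinv2 : HasLead z₀ ((yjp2 ^ 2)⁻¹) (-(2*K)) ((a*a)⁻¹) := by
    rw [pow_two]
    exact ((hyp2.mul hyp2).inv).congr' (by ring) (by ring_nf)
  have e3 : yjp3 = -yjp1 + (RatFunc.C bj2 * yjp2 + RatFunc.C cj2) / yjp2 ^ 2 := by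
    linear_combination heq3
  by_cases hc2 : cj2 = 0
  · by_cases hb2 : bj2 = 0
    · have e3' : yjp3 = -yjp1 := by
        rw [e3, hc2, hb2]; simp
      rw [e3']
      exact (hyp1.neg).order
    · have hN3 : HasLead z₀ (RatFunc.C bj2 * yjp2 + RatFunc.C cj2) K (bj2 * -a) := by
        simpa [hc2] using ((hasLead_C (z₀ := z₀) hb2).mul hyp2).congr
          (show (0:ℤ) + K = K by ring)
      have hfrac3 : HasLead z₀ ((RatFunc.C bj2 * yjp2 + RatFunc.C cj2) / yjp2 ^ 2)
          (K + -(2*K)) (bj2 * -a * (a*a)⁻¹) := by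
        rw [div_eq_mul_inv]; exact hN3.mul hinv2
      have : HasLead z₀ yjp3 (-(2*K)) (-(cj * (a*a)⁻¹)) := by
        rw [e3]; exact (hyp1.neg).add_lt hfrac3 (by omega)
      exact this.order
  · have hN3 : HasLead z₀ (RatFunc.C bj2 * yjp2 + RatFunc.C cj2) 0 cj2 := by
      by_cases hb2 : bj2 = 0
      · simpa [hb2] using hasLead_C (z₀ := z₀) hc2
      · have h := (hasLead_C (z₀ := z₀) hc2).add_lt
          (((hasLead_C (z₀ := z₀) hb2).mul hyp2).congr (show (0:ℤ) + K = K by ring))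
          (by omega)
        rwa [add_comm (RatFunc.C cj2) (RatFunc.C bj2 * yjp2)] at h
    have hfrac3 : HasLead z₀ ((RatFunc.C bj2 * yjp2 + RatFunc.C cj2) / yjp2 ^ 2)
        (-(2*K)) (cj2 * (a*a)⁻¹) := by
      rw [div_eq_mul_inv]
      exact (hN3.mul hinv2).congr (by ring)
    have hsum : -(cj * (a*a)⁻¹) + cj2 * (a*a)⁻¹ ≠ 0 := by
      have haa : a * a ≠ 0 := mul_ne_zero ha0 ha0
      intro hcon
      apply sub_ne_zero.mpr hne
      have h2 : (cj2 - cj) * (a*a)⁻¹ = 0 := by linear_combination hcon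
      rcases mul_eq_zero.1 h2 with h3 | h3
      · exact h3
      · exact absurd h3 (inv_ne_zero haa)
    have : HasLead z₀ yjp3 (-(2*K)) (-(cj * (a*a)⁻¹) + cj2 * (a*a)⁻¹) := by
      rw [e3]; exact (hyp1.neg).add_eq hfrac3 hsum
    exact this.order
end
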